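/- arXiv:2009.01514 — 9 statements merged into one kernel-verified Lean document; each statement's English description precedes it below -/
import Mathlib

section
/- For every real ν ≥ 1/2 and every f ∈ H one has T^ν (f − P f) = 0, where T^ν is the fractional power of the positive operator T given by the continuous functional calculus. -/
open ContinuousLinearMap
open scoped InnerProductSpace

/-- The fractional power `A ^ s` of a (positive) operator, defined via the continuous
functional calculus applied to the real function `x ↦ x ^ s`. -/
noncomputable def opow {H : Type*} [NormedAddCommGroup H] [InnerProductSpace ℂ H]
    [CompleteSpace H] (A : H →L[ℂ] H) (s : ℝ) : H →L[ℂ] H :=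
  cfc (fun x : ℝ => x ^ s) A

/-- For every real `ν ≥ 1/2` and every `f ∈ H`, one has
`T^ν (f − P f) = 0`, where `T = S* S` and `P = S* (S S*)⁻¹ S`, and `T^ν` is the
fractional power of the positive operator `T` via the continuous functional calculus. -/
theorem fractional_power_interpolation_error_in_null_space
    {H : Type*} [NormedAddCommGroup H] [InnerProductSpace ℂ H] [CompleteSpace H]
    {m : ℕ} (hm : 0 < m)
    (S : H →L[ℂ] EuclideanSpace ℂ (Fin m))
    (hinv : IsUnit (S ∘L ContinuousLinearMap.adjoint S))
    (ν : ℝ) (hν : (1 : ℝ) / 2 ≤ ν) (f : H) :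
    (opow (ContinuousLinearMap.adjoint S ∘L S) ν)
      (f - (ContinuousLinearMap.adjoint S)
        ((Ring.inverse (S ∘L ContinuousLinearMap.adjoint S)) (S f))) = 0 := by
  set T : H →L[ℂ] H := ContinuousLinearMap.adjoint S ∘L S with hT
  set g : H := f - (ContinuousLinearMap.adjoint S)
      ((Ring.inverse (S ∘L ContinuousLinearMap.adjoint S)) (S f)) with hg
  have hTpos : T.IsPositive := by
    exact ContinuousLinearMap.isPositive_adjoint_comp_self S
  have hTsa : IsSelfAdjoint T := hTpos.isSelfAdjoint
  -- S g = 0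
  have hSg : S g = 0 := by
    have h1 : S ((ContinuousLinearMap.adjoint S)
        ((Ring.inverse (S ∘L ContinuousLinearMap.adjoint S)) (S f)))
        = ((S ∘L ContinuousLinearMap.adjoint S) * Ring.inverse (S ∘L ContinuousLinearMap.adjoint S)) (S f) := rfl
    rw [hg, map_sub, h1, Ring.mul_inverse_cancel _ hinv]
    simp
  have hspec : ∀ x ∈ spectrum ℝ T, 0 ≤ x := fun x hx =>
    spectrum_nonneg_of_nonneg ((ContinuousLinearMap.nonneg_iff_isPositive T).mpr hTpos) hx
  have hc12 : Continuous (fun x : ℝ => x ^ (1/2 : ℝ)) :=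
    continuous_iff_continuousAt.mpr fun x =>
      Real.continuousAt_rpow_const x _ (Or.inr (by norm_num))
  have hcν : Continuous (fun x : ℝ => x ^ (ν - 1/2 : ℝ)) :=
    continuous_iff_continuousAt.mpr fun x =>
      Real.continuousAt_rpow_const x _ (Or.inr (by linarith))
  set B : H →L[ℂ] H := cfc (fun x : ℝ => x ^ (1/2 : ℝ)) T with hB
  have hBsa : IsSelfAdjoint B := cfc_predicate _ T
  have hBB : B * B = T := by
    rw [hB, ← cfc_mul _ _ T hc12.continuousOn hc12.continuousOn]
    have : cfc (fun x : ℝ => x ^ (1/2 : ℝ) * x ^ (1/2 : ℝ)) T = cfc (fun x : ℝ => x) T := by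
      apply cfc_congr
      intro x hx
      show x ^ (1/2 : ℝ) * x ^ (1/2 : ℝ) = x
      rw [← Real.rpow_add_of_nonneg (hspec x hx) (by norm_num) (by norm_num)]
      norm_num
    rw [this, cfc_id' ℝ T]
  have hBg : B g = 0 := by
    have hin : ⟪B g, B g⟫_ℂ = 0 := by
      calc ⟪B g, B g⟫_ℂ
          = ⟪(ContinuousLinearMap.adjoint B) (B g), g⟫_ℂ :=
            (ContinuousLinearMap.adjoint_inner_left B g (B g)).symm
        _ = ⟪T g, g⟫_ℂ := by
            rw [hBsa.adjoint_eq, ← ContinuousLinearMap.mul_apply, hBB]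
        _ = ⟪(ContinuousLinearMap.adjoint S) (S g), g⟫_ℂ := rfl
        _ = ⟪S g, S g⟫_ℂ := ContinuousLinearMap.adjoint_inner_left S g (S g)
        _ = 0 := by rw [hSg]; simp
    exact inner_self_eq_zero.mp hin
  have hfact : opow T ν = cfc (fun x : ℝ => x ^ (ν - 1/2 : ℝ)) T * B := by
    rw [opow, hB, ← cfc_mul _ _ T hcν.continuousOn hc12.continuousOn]
    apply cfc_congr
    intro x hx
    show x ^ ν = x ^ (ν - 1/2 : ℝ) * x ^ (1/2 : ℝ)
    rw [← Real.rpow_add_of_nonneg (hspec x hx) (by linarith) (by norm_num)]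
    norm_num
  rw [hfact]
  show (cfc (fun x : ℝ => x ^ (ν - 1/2 : ℝ)) T) (B g) = 0
  rw [hBg, map_zero]
end

section
/- For every λ > 0 the operator P − (T + λI)⁻¹ T is positive (self-adjoint with nonnegative quadratic form); equivalently, (T + λI)⁻¹ T ≤ P in the Loewner order. (Here T + λI is invertible because T is positive and λ > 0.) -/
open ContinuousLinearMap RCLike

section helpers

variable {E : Type*} [NormedAddCommGroup E] [InnerProductSpace ℂ E] [CompleteSpace E]

lemma isPositive_smul_real {c : ℝ} (hc : 0 ≤ c) {T : E →L[ℂ] E} (hT : T.IsPositive) :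
    ((c : ℂ) • T).IsPositive := by
  constructor
  · rw [← isSelfAdjoint_iff_isSymmetric, IsSelfAdjoint, star_smul, hT.isSelfAdjoint.star_eq]
    norm_num
  · intro x
    have := hT.2 x
    rw [reApplyInnerSelf] at this ⊢
    rw [smul_apply, inner_smul_left, Complex.conj_ofReal, RCLike.mul_re]
    have h1 : re ((c:ℂ)) = c := by simp
    have h2 : im ((c:ℂ)) = 0 := by simp
    rw [h1, h2, zero_mul, sub_zero]
    exact mul_nonneg hc this

lemma isPositive_adjoint_comp_self {F : Type*} [NormedAddCommGroup F]
    [InnerProductSpace ℂ F] [CompleteSpace F] (S : E →L[ℂ] F) :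
    ((adjoint S) ∘L S).IsPositive := by
  constructor
  · rw [← isSelfAdjoint_iff_isSymmetric, IsSelfAdjoint, star_eq_adjoint, adjoint_comp, adjoint_adjoint]
  · intro x
    rw [reApplyInnerSelf, comp_apply, adjoint_inner_left]
    exact inner_self_nonneg

lemma isPositive_inverse {A : E →L[ℂ] E} (hA : A.IsPositive) (hu : IsUnit A) :
    (Ring.inverse A).IsPositive := by
  constructor
  · rw [← isSelfAdjoint_iff_isSymmetric, IsSelfAdjoint, ← Ring.inverse_star, hA.isSelfAdjoint.star_eq]
  · intro x
    have hx : A ((Ring.inverse A) x) = x := by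
      have : A ∘L (Ring.inverse A) = 1 := Ring.mul_inverse_cancel A hu
      calc A ((Ring.inverse A) x) = (A ∘L Ring.inverse A) x := rfl
      _ = x := by rw [this]; rfl
    have h2 : (Ring.inverse A).reApplyInnerSelf x
        = re (inner ℂ ((Ring.inverse A) x) (A ((Ring.inverse A) x)) : ℂ) := by
      rw [reApplyInnerSelf, hx]
    rw [h2, inner_re_symm]
    exact hA.2 _

lemma isUnit_add_smul_one' {X : E →L[ℂ] E} (hX : X.IsPositive) {lam : ℝ} (hlam : 0 < lam) :
    IsUnit (X + (lam : ℂ) • (1 : E →L[ℂ] E)) := by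
  apply isUnit_of_forall_le_norm_inner_map _ (c := ⟨lam, hlam.le⟩)
  · exact_mod_cast hlam
  intro x
  have key : (‖x‖ ^ 2 * lam : ℝ)
      ≤ re (inner ℂ ((X + (lam : ℂ) • (1 : E →L[ℂ] E)) x) x : ℂ) := by
    rw [add_apply, inner_add_left, map_add, smul_apply, ContinuousLinearMap.one_apply, inner_smul_left,
      Complex.conj_ofReal, RCLike.mul_re]
    have h1 : re ((lam : ℂ)) = lam := by simp
    have h2 : im ((lam : ℂ)) = 0 := by simp
    rw [h1, h2, zero_mul, sub_zero, inner_self_eq_norm_sq]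
    nlinarith [hX.2 x, hX.inner_nonneg_left x, hX.re_inner_nonneg_left x]
  calc (‖x‖ ^ 2 * (⟨lam, hlam.le⟩ : NNReal) : ℝ) = ‖x‖ ^ 2 * lam := rfl
  _ ≤ re (inner ℂ ((X + (lam : ℂ) • (1 : E →L[ℂ] E)) x) x : ℂ) := key
  _ ≤ ‖(inner ℂ ((X + (lam : ℂ) • (1 : E →L[ℂ] E)) x) x : ℂ)‖ := RCLike.re_le_norm _

end helpers



set_option maxHeartbeats 2000000 in
/-- For every `λ > 0`, the operator `P − (T + λI)⁻¹ T` is positive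
(self-adjoint with nonnegative quadratic form), where `T = S* S` and
`P = S* (S S*)⁻¹ S`.  (Here `T + λI` is invertible because `T` is positive and
`λ > 0`, so `Ring.inverse (T + λ • 1)` is its genuine inverse.) -/
theorem projection_dominates_regularized_inverse
    {H : Type*} [NormedAddCommGroup H] [InnerProductSpace ℂ H] [CompleteSpace H]
    {m : ℕ} (hm : 0 < m)
    (S : H →L[ℂ] EuclideanSpace ℂ (Fin m))
    (hinv : IsUnit (S ∘L ContinuousLinearMap.adjoint S))
    (lam : ℝ) (hlam : 0 < lam) :
    letI T : H →L[ℂ] H := ContinuousLinearMap.adjoint S ∘L S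
    letI P : H →L[ℂ] H :=
      (ContinuousLinearMap.adjoint S) ∘L
        (Ring.inverse (S ∘L ContinuousLinearMap.adjoint S)) ∘L S
    (P - (Ring.inverse (T + (lam : ℂ) • (1 : H →L[ℂ] H))) ∘L T).IsPositive := by
  show ((ContinuousLinearMap.adjoint S) ∘L
        (Ring.inverse (S ∘L ContinuousLinearMap.adjoint S)) ∘L S -
      (Ring.inverse ((ContinuousLinearMap.adjoint S ∘L S) + (lam : ℂ) • (1 : H →L[ℂ] H)))
        ∘L (ContinuousLinearMap.adjoint S ∘L S)).IsPositive
  set a := ContinuousLinearMap.adjoint S with ha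
  set A : EuclideanSpace ℂ (Fin m) →L[ℂ] EuclideanSpace ℂ (Fin m) := S ∘L a with hAdef
  set T : H →L[ℂ] H := a ∘L S with hTdef
  have hA : A.IsPositive := by
    have := _root_.isPositive_adjoint_comp_self a
    rwa [adjoint_adjoint] at this
  have hT : T.IsPositive := _root_.isPositive_adjoint_comp_self S
  set B : EuclideanSpace ℂ (Fin m) →L[ℂ] EuclideanSpace ℂ (Fin m)
    := A + (lam : ℂ) • 1 with hBdef
  have hBu : IsUnit B := isUnit_add_smul_one' hA hlam
  set F : H →L[ℂ] H := T + (lam : ℂ) • 1 with hFdef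
  have hFu : IsUnit F := isUnit_add_smul_one' hT hlam
  set Ai := Ring.inverse A with hAi
  set Bi := Ring.inverse B with hBi
  have hAAi : A * Ai = 1 := Ring.mul_inverse_cancel A hinv
  have hAiA : Ai * A = 1 := Ring.inverse_mul_cancel A hinv
  have hBBi : B * Bi = 1 := Ring.mul_inverse_cancel B hBu
  have hBiB : Bi * B = 1 := Ring.inverse_mul_cancel B hBu
  -- the key push-through identity
  have h1 : F * (a ∘L (Bi ∘L S)) = T := by
    have e1 : T ∘L (a ∘L (Bi ∘L S)) = a ∘L ((A ∘L Bi) ∘L S) := by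
      rw [hTdef, hAdef]
      simp only [comp_assoc]
    have e2 : (lam : ℂ) • (a ∘L (Bi ∘L S)) = a ∘L (((lam : ℂ) • (1:_)) ∘L Bi ∘L S) := by
      rw [smul_comp, one_def, id_comp, comp_smul]
    show F ∘L (a ∘L (Bi ∘L S)) = T
    rw [hFdef, add_comp, smul_comp, one_def, id_comp, e1, e2, ← comp_add,
      ← comp_assoc ((lam : ℂ) • (1:_)) Bi S, ← add_comp]
    have e3 : (A ∘L Bi + ((lam : ℂ) • (1:_)) ∘L Bi) = 1 := by
      rw [← add_comp, ← hBdef]; exact hBBi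
    rw [e3, one_def, id_comp, hTdef]
  have hkey : Ring.inverse F ∘L T = a ∘L (Bi ∘L S) := by
    calc Ring.inverse F ∘L T = Ring.inverse F * T := rfl
    _ = Ring.inverse F * (F * (a ∘L (Bi ∘L S))) := by rw [h1]
    _ = (Ring.inverse F * F) * (a ∘L (Bi ∘L S)) := by rw [mul_assoc]
    _ = a ∘L (Bi ∘L S) := by rw [Ring.inverse_mul_cancel F hFu, one_mul]
  -- the operator Ai - Bi is positive
  have hBsa : IsSelfAdjoint B := by
    rw [hBdef]
    refine hA.isSelfAdjoint.add ?_
    rw [IsSelfAdjoint, star_smul, star_one, Complex.star_def, Complex.conj_ofReal]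
  have hBisa : IsSelfAdjoint Bi := by
    have e5 : Ring.inverse (star B) = star (Ring.inverse B) := Ring.inverse_star B
    rw [hBsa.star_eq] at e5
    exact e5.symm
  set D := (lam : ℂ) • (1 : EuclideanSpace ℂ (Fin m) →L[ℂ] EuclideanSpace ℂ (Fin m))
    + ((lam * lam : ℝ) : ℂ) • Ai with hDdef
  have hDpos : D.IsPositive :=
    (isPositive_smul_real hlam.le isPositive_one).add
      (isPositive_smul_real (mul_nonneg hlam.le hlam.le) (isPositive_inverse hA hinv))
  have hD : B * (Ai - Bi) * B = D := by
    have c1 : B * (Ai - Bi) * B = B * Ai * B - B := by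
      rw [mul_sub, sub_mul, hBBi, one_mul]
    have c2 : B * Ai = 1 + (lam : ℂ) • Ai := by
      rw [hBdef, add_mul, hAAi, smul_mul_assoc, one_mul]
    have c3 : (1 + (lam : ℂ) • Ai) * B = B + (lam : ℂ) • 1 + ((lam : ℂ) * lam) • Ai := by
      rw [add_mul, one_mul, smul_mul_assoc, hBdef, mul_add, hAiA, mul_smul_comm, mul_one,
        smul_add, smul_smul]
      abel
    rw [c1, c2, c3, hDdef]
    push_cast
    abel
  have h5 : Bi * (D * Bi) = Ai - Bi := by
    rw [← hD]
    have e4 : Bi * (B * (Ai - Bi) * B * Bi) = (Bi * B) * (Ai - Bi) * (B * Bi) := by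
      noncomm_ring
    rw [e4, hBiB, hBBi, one_mul, mul_one]
  have hCpos : (Ai - Bi).IsPositive := by
    have h6 := hDpos.adjoint_conj Bi
    rw [← star_eq_adjoint, hBisa.star_eq] at h6
    rw [← mul_def, ← mul_def, h5] at h6
    exact h6
  -- conclude
  rw [hkey, ← comp_sub, ← sub_comp]
  exact hCpos.adjoint_conj S
end

section
/- For every bounded positive operator L : H → H, every real v ≥ 0 and every λ > 0, one has ‖L^v (I − P)‖ ≤ λ^{1/2} ‖L^v (T + λI)^{−1/2}‖, where ‖·‖ is the operator norm. -/
open ContinuousLinearMap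

set_option maxHeartbeats 1000000 in
/-- For every bounded positive operator `L : H → H`, every real `v ≥ 0`
and every `λ > 0`:  `‖L^v (I − P)‖ ≤ λ^{1/2} ‖L^v (T + λI)^{−1/2}‖`, where
`T = S* S` and `P = S* (S S*)⁻¹ S`, and `‖·‖` is the operator norm. -/
theorem norm_power_compl_projection_le
    {H : Type*} [NormedAddCommGroup H] [InnerProductSpace ℂ H] [CompleteSpace H]
    {m : ℕ} (hm : 0 < m)
    (S : H →L[ℂ] EuclideanSpace ℂ (Fin m))
    (hinv : IsUnit (S ∘L ContinuousLinearMap.adjoint S))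
    (L : H →L[ℂ] H) (hL : L.IsPositive)
    (v : ℝ) (hv : 0 ≤ v) (lam : ℝ) (hlam : 0 < lam) :
    letI T : H →L[ℂ] H := ContinuousLinearMap.adjoint S ∘L S
    letI P : H →L[ℂ] H :=
      (ContinuousLinearMap.adjoint S) ∘L
        (Ring.inverse (S ∘L ContinuousLinearMap.adjoint S)) ∘L S
    ‖(opow L v) ∘L ((1 : H →L[ℂ] H) - P)‖ ≤
      lam ^ ((1 : ℝ) / 2) *
        ‖(opow L v) ∘L opow (T + (lam : ℂ) • (1 : H →L[ℂ] H)) (-(1 / 2))‖ := by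
  set S' : EuclideanSpace ℂ (Fin m) →L[ℂ] H := ContinuousLinearMap.adjoint S with hS'
  set N : EuclideanSpace ℂ (Fin m) →L[ℂ] EuclideanSpace ℂ (Fin m) :=
    Ring.inverse (S ∘L S') with hNdef
  set P : H →L[ℂ] H := S' ∘L N ∘L S with hPdef
  set T : H →L[ℂ] H := S' ∘L S with hTdef
  set A : H →L[ℂ] H := T + (lam : ℂ) • 1 with hAdef
  set Q : H →L[ℂ] H := 1 - P with hQdef
  set X : H →L[ℂ] H := opow L v with hXdef
  -- Basic algebraic facts
  have hSP : S ∘L P = S := by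
    have h1 : (S ∘L S') ∘L N = 1 := Ring.mul_inverse_cancel _ hinv
    calc S ∘L P = ((S ∘L S') ∘L N) ∘L S := by
          rw [hPdef, ← comp_assoc, ← comp_assoc]
      _ = S := by rw [h1, one_def, id_comp]
  have hTP : T ∘L P = T := by rw [hTdef, comp_assoc, hSP]
  have hTQ : T * Q = 0 := by
    rw [hQdef, mul_sub, mul_one, show T * P = T ∘L P from rfl, hTP, sub_self]
  have hsmul : ((lam : ℂ) • (1 : H →L[ℂ] H)) = lam • (1 : H →L[ℂ] H) := by
    rw [← Complex.coe_algebraMap, algebraMap_smul]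
  have hAQ : A * Q = lam • Q := by
    rw [hAdef, add_mul, hTQ, zero_add, hsmul, smul_mul_assoc, one_mul]
  -- Self-adjointness facts
  have hSS'sa : star (S ∘L S') = S ∘L S' := by
    rw [star_eq_adjoint, adjoint_comp, hS', adjoint_adjoint]
  have hNsa : star N = N := by rw [hNdef, ← Ring.inverse_star, hSS'sa]
  have hPsa : ContinuousLinearMap.adjoint P = P := by
    rw [hPdef, adjoint_comp, adjoint_comp, ← star_eq_adjoint (A := N), hNsa, hS',
      adjoint_adjoint, comp_assoc]
  have hPP : P * P = P := by
    calc P * P = S' ∘L (N ∘L (S ∘L P)) := by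
          rw [show P * P = P ∘L P from rfl, hPdef, comp_assoc, comp_assoc]
      _ = P := by rw [hSP, hPdef]
  have hQsa : ContinuousLinearMap.adjoint Q = Q := by
    rw [← star_eq_adjoint, hQdef, star_sub, star_one, star_eq_adjoint, hPsa]
  have hQQ : Q * Q = Q := by
    rw [hQdef, sub_mul, one_mul, mul_sub, mul_one, hPP, sub_self, sub_zero]
  -- Norm of Q is at most 1
  have hQle : ∀ x : H, ‖Q x‖ ≤ ‖x‖ := by
    intro x
    have h1 : (inner ℂ (Q x) (Q x) : ℂ) = inner ℂ x (Q x) := by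
      calc (inner ℂ (Q x) (Q x) : ℂ) = inner ℂ ((ContinuousLinearMap.adjoint Q) x) (Q x) := by
            rw [hQsa]
        _ = inner ℂ x (Q (Q x)) := adjoint_inner_left Q (Q x) x
        _ = inner ℂ x (Q x) := by rw [← ContinuousLinearMap.mul_apply, hQQ]
    have h2 : ‖Q x‖ ^ 2 = RCLike.re (inner ℂ x (Q x) : ℂ) := by
      rw [← h1, inner_self_eq_norm_sq]
    have h3 : RCLike.re (inner ℂ x (Q x) : ℂ) ≤ ‖x‖ * ‖Q x‖ :=
      (RCLike.re_le_norm _).trans (norm_inner_le_norm x (Q x))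
    rcases eq_or_lt_of_le (norm_nonneg (Q x)) with h | h
    · rw [← h]; exact norm_nonneg x
    · have : ‖Q x‖ * ‖Q x‖ ≤ ‖x‖ * ‖Q x‖ := by nlinarith [h2, h3]
      exact le_of_mul_le_mul_right this h
  have hQnorm : ‖Q‖ ≤ 1 :=
    opNorm_le_bound Q zero_le_one fun x => by rw [one_mul]; exact hQle x
  -- A is self-adjoint with spectrum in [lam, ∞)
  have hTpos : T.IsPositive := by
    have h0 := (isPositive_one (𝕜 := ℂ) (E := EuclideanSpace ℂ (Fin m))).adjoint_conj S
    have h1 : ContinuousLinearMap.adjoint S ∘L ((1 : EuclideanSpace ℂ (Fin m) →L[ℂ]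
        EuclideanSpace ℂ (Fin m)) ∘L S) = T := by
      ext x; simp [hTdef, hS']
    rwa [h1] at h0
  have hIsa : IsSelfAdjoint ((lam : ℂ) • (1 : H →L[ℂ] H)) := by
    rw [hsmul]
    exact IsSelfAdjoint.smul (star_trivial lam) (IsSelfAdjoint.one _)
  have hAsa : IsSelfAdjoint A := hTpos.isSelfAdjoint.add hIsa
  have hspec : spectrum ℝ A ⊆ Set.Ici lam := by
    have hTnn : (0 : H →L[ℂ] H) ≤ T := (nonneg_iff_isPositive T).mpr hTpos
    have h1 : A = T + algebraMap ℝ (H →L[ℂ] H) lam := by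
      rw [hAdef, hsmul, Algebra.algebraMap_eq_smul_one]
    rw [h1, ← spectrum.add_singleton_eq]
    rintro x hx
    rw [Set.add_singleton] at hx
    obtain ⟨y, hy, rfl⟩ := hx
    have := spectrum_nonneg_of_nonneg hTnn hy
    simpa using this
  have hspec_pos : ∀ x ∈ spectrum ℝ A, 0 < x := fun x hx => lt_of_lt_of_le hlam (hspec hx)
  -- The key functional calculus computation
  set f : ℝ → ℝ := fun x => x ^ (-(1 / 2) : ℝ) with hfdef
  set c : ℝ := lam ^ (-(1 / 2) : ℝ) with hcdef
  set h : ℝ → ℝ := fun x =>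
    -((Real.sqrt x * Real.sqrt lam * (Real.sqrt x + Real.sqrt lam))⁻¹) with hhdef
  have hcont_f : ContinuousOn f (spectrum ℝ A) := by
    apply ContinuousOn.rpow_const continuousOn_id
    intro x hx
    exact Or.inl (ne_of_gt (hspec_pos x hx))
  have hcont_h : ContinuousOn h (spectrum ℝ A) := by
    apply ContinuousOn.neg
    apply ContinuousOn.inv₀
    · exact ((Real.continuous_sqrt.continuousOn.mul continuousOn_const).mul
        (Real.continuous_sqrt.continuousOn.add continuousOn_const))
    · intro x hx
      have hx0 : 0 < x := hspec_pos x hx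
      have h1 : 0 < Real.sqrt x := Real.sqrt_pos.mpr hx0
      have h2 : 0 < Real.sqrt lam := Real.sqrt_pos.mpr hlam
      positivity
  have heq : ∀ x ∈ spectrum ℝ A, f x - c = h x * (x - lam) := by
    intro x hx
    have hx0 : 0 < x := hspec_pos x hx
    have h1 : 0 < Real.sqrt x := Real.sqrt_pos.mpr hx0
    have h2 : 0 < Real.sqrt lam := Real.sqrt_pos.mpr hlam
    have hxs : Real.sqrt x ^ 2 = x := Real.sq_sqrt hx0.le
    have hls : Real.sqrt lam ^ 2 = lam := Real.sq_sqrt hlam.le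
    have hfx : f x = (Real.sqrt x)⁻¹ := by
      rw [hfdef]
      simp only
      rw [Real.rpow_neg hx0.le, ← Real.sqrt_eq_rpow]
    have hfc : c = (Real.sqrt lam)⁻¹ := by
      rw [hcdef, Real.rpow_neg hlam.le, ← Real.sqrt_eq_rpow]
    have key : ∀ u l : ℝ, 0 < u → 0 < l →
        u⁻¹ - l⁻¹ = -((u * l * (u + l))⁻¹) * (u ^ 2 - l ^ 2) := by
      intro u l hu hl
      field_simp
      ring
    rw [hfx, hfc, hhdef]
    simp only
    rw [key _ _ h1 h2, hxs, hls]
  have e1 : cfc (fun x => f x - c) A = cfc f A - algebraMap ℝ (H →L[ℂ] H) c := by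
    rw [cfc_sub f (fun _ => c) A hcont_f continuousOn_const, cfc_const c A hAsa]
  have e2 : cfc (fun x => f x - c) A
      = cfc h A * (A - algebraMap ℝ (H →L[ℂ] H) lam) := by
    rw [cfc_congr heq, cfc_mul h (fun x => x - lam) A hcont_h
      (continuousOn_id.sub continuousOn_const),
      cfc_sub (fun x : ℝ => x) (fun _ => lam) A continuousOn_id continuousOn_const,
      cfc_id' ℝ A hAsa, cfc_const lam A hAsa]
  have hAlamQ : (A - algebraMap ℝ (H →L[ℂ] H) lam) * Q = 0 := by
    rw [sub_mul, hAQ, ← Algebra.smul_def, sub_self]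
  have e3 : cfc f A * Q = c • Q := by
    have e12 : cfc f A = cfc h A * (A - algebraMap ℝ (H →L[ℂ] H) lam)
        + algebraMap ℝ (H →L[ℂ] H) c := by
      rw [← e2, e1]; abel
    rw [e12, add_mul, mul_assoc, hAlamQ, mul_zero, zero_add, ← Algebra.smul_def]
  -- Conclusion
  have hc_pos : c * lam ^ ((1 : ℝ) / 2) = 1 := by
    rw [hcdef, ← Real.rpow_add hlam]
    norm_num
  have e4 : X ∘L Q = lam ^ ((1 : ℝ) / 2) • ((X * cfc f A) * Q) := by
    rw [mul_assoc, e3, mul_smul_comm, smul_smul, mul_comm (lam ^ ((1:ℝ)/2)) c, hc_pos,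
      one_smul]
    rfl
  have hopow : opow A (-(1 / 2)) = cfc f A := rfl
  calc ‖X ∘L Q‖ = ‖lam ^ ((1 : ℝ) / 2) • ((X * cfc f A) * Q)‖ := by rw [e4]
    _ = lam ^ ((1 : ℝ) / 2) * ‖(X * cfc f A) * Q‖ := by
        rw [norm_smul, Real.norm_of_nonneg (Real.rpow_nonneg hlam.le _)]
    _ ≤ lam ^ ((1 : ℝ) / 2) * ‖X * cfc f A‖ := by
        apply mul_le_mul_of_nonneg_left _ (Real.rpow_nonneg hlam.le _)
        calc ‖(X * cfc f A) * Q‖ ≤ ‖X * cfc f A‖ * ‖Q‖ := norm_mul_le _ _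
          _ ≤ ‖X * cfc f A‖ * 1 :=
            mul_le_mul_of_nonneg_left hQnorm (norm_nonneg _)
          _ = ‖X * cfc f A‖ := mul_one _
    _ = lam ^ ((1 : ℝ) / 2) * ‖X ∘L opow A (-(1 / 2))‖ := by rw [hopow]; rfl
end

section
/- For every f ∈ H and every λ > 0: ‖L^{1/2} (P f − f)‖ ≤ λ^{1/2} · Q_λ · ‖f‖. (In the kernel-interpolation interpretation this bounds the L²_ρ-norm error ‖f_D − f*‖_ρ of interpolating a native-space target f* = f by λ^{1/2} Q_λ ‖f*‖.) -/
open ContinuousLinearMap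

section Aux

variable {H : Type*} [NormedAddCommGroup H] [InnerProductSpace ℂ H] [CompleteSpace H]

lemma opow_selfAdjoint (A : H →L[ℂ] H) (s : ℝ) : IsSelfAdjoint (opow A s) :=
  cfc_predicate _ _

lemma spectrum_nonneg_of_isPositive {A : H →L[ℂ] H} (hA : A.IsPositive) :
    ∀ x ∈ spectrum ℝ A, 0 ≤ x :=
  SpectrumRestricts.nnreal_iff.mp hA.spectrumRestricts

lemma opow_half_mul_self {A : H →L[ℂ] H} (hA : A.IsPositive) :
    opow A (1/2) * opow A (1/2) = A := by
  have hsp := spectrum_nonneg_of_isPositive hA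
  have hcont : ContinuousOn (fun x : ℝ => x ^ (1/2 : ℝ)) (spectrum ℝ A) :=
    fun x hx => (Real.continuousAt_rpow_const x _ (Or.inr (by norm_num))).continuousWithinAt
  rw [opow, ← cfc_mul _ _ A hcont hcont]
  calc cfc (fun x : ℝ => x ^ (1/2:ℝ) * x ^ (1/2:ℝ)) A = cfc (_root_.id : ℝ → ℝ) A := by
        apply cfc_congr
        intro x hx
        simp only [_root_.id]
        rw [← Real.rpow_add' (hsp x hx) (by norm_num)]
        norm_num
    _ = A := cfc_id ℝ A hA.isSelfAdjoint

lemma norm_opow_half_sq {A : H →L[ℂ] H} (hA : A.IsPositive) (x : H) :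
    ‖opow A (1/2) x‖ ^ 2 = RCLike.re (inner ℂ (A x) x : ℂ) := by
  have hsa := opow_selfAdjoint A (1/2)
  have h1 : (inner ℂ (A x) x : ℂ) = inner ℂ (opow A (1/2) x) (opow A (1/2) x) := by
    conv_lhs => rw [← opow_half_mul_self hA]
    rw [ContinuousLinearMap.mul_apply]
    nth_rewrite 1 [← hsa.adjoint_eq]
    rw [adjoint_inner_left]
  rw [h1, inner_self_eq_norm_sq]

lemma opow_neg_half_mul_half {A : H →L[ℂ] H} (hA : A.IsPositive)
    (hsp : ∀ x ∈ spectrum ℝ A, 0 < x) :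
    opow A (-(1/2)) * opow A (1/2) = 1 := by
  have hc1 : ContinuousOn (fun x : ℝ => x ^ (-(1/2) : ℝ)) (spectrum ℝ A) :=
    fun x hx => (Real.continuousAt_rpow_const x _ (Or.inl (hsp x hx).ne')).continuousWithinAt
  have hc2 : ContinuousOn (fun x : ℝ => x ^ ((1/2) : ℝ)) (spectrum ℝ A) :=
    fun x hx => (Real.continuousAt_rpow_const x _ (Or.inr (by norm_num))).continuousWithinAt
  rw [opow, opow, ← cfc_mul _ _ A hc1 hc2]
  calc cfc (fun x : ℝ => x ^ (-(1/2):ℝ) * x ^ ((1/2):ℝ)) A = cfc (fun _ : ℝ => (1:ℝ)) A := by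
        apply cfc_congr
        intro x hx
        dsimp only
        rw [← Real.rpow_add (hsp x hx)]
        norm_num
    _ = 1 := cfc_const_one ℝ A hA.isSelfAdjoint

lemma isPositive_smul_one {lam : ℝ} (h : 0 ≤ lam) :
    ((lam : ℂ) • (1 : H →L[ℂ] H)).IsPositive := by
  refine ContinuousLinearMap.isPositive_def'.mpr ⟨?_, ?_⟩
  · rw [IsSelfAdjoint, star_smul, star_one, Complex.star_def, Complex.conj_ofReal]
  · intro x
    have : ((lam : ℂ) • (1 : H →L[ℂ] H)).reApplyInnerSelf x = lam * ‖x‖ ^ 2 := by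
      rw [ContinuousLinearMap.reApplyInnerSelf_apply]
      simp only [ContinuousLinearMap.smul_apply, ContinuousLinearMap.one_apply,
        inner_smul_left, Complex.conj_ofReal]
      rw [inner_self_eq_norm_sq_to_K,
        show ((lam:ℂ)) = (RCLike.ofReal lam : ℂ) from rfl, RCLike.re_ofReal_mul,
        ← RCLike.ofReal_pow, RCLike.ofReal_re]
    rw [this]; positivity

lemma coe_smul_one_eq_algebraMap (lam : ℝ) :
    ((lam : ℂ) • (1 : H →L[ℂ] H)) = algebraMap ℝ (H →L[ℂ] H) lam := by
  rw [Algebra.algebraMap_eq_smul_one]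
  ext v
  simp

lemma spectrum_pos_add {A : H →L[ℂ] H} (hA : A.IsPositive) {lam : ℝ} (hlam : 0 < lam) :
    ∀ x ∈ spectrum ℝ (A + (lam : ℂ) • (1 : H →L[ℂ] H)), 0 < x := by
  intro x hx
  rw [coe_smul_one_eq_algebraMap, add_comm, ← spectrum.singleton_add_eq] at hx
  obtain ⟨l, hl, y, hy, rfl⟩ := Set.mem_add.mp hx
  rw [Set.mem_singleton_iff] at hl
  subst hl
  have := spectrum_nonneg_of_isPositive hA y hy
  linarith


end Aux

set_option maxHeartbeats 1600000 in
/-- For every `f ∈ H` and every `λ > 0`: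
`‖L^{1/2} (P f − f)‖ ≤ λ^{1/2} · Q_λ · ‖f‖`, where
`Q_λ := ‖(T + λI)^{−1/2} (L + λI)^{1/2}‖`, `T = S* S` and `P = S* (S S*)⁻¹ S`. -/
theorem native_space_interpolation_error_bound
    {H : Type*} [NormedAddCommGroup H] [InnerProductSpace ℂ H] [CompleteSpace H]
    {m : ℕ} (hm : 0 < m)
    (S : H →L[ℂ] EuclideanSpace ℂ (Fin m))
    (hinv : IsUnit (S ∘L ContinuousLinearMap.adjoint S))
    (L : H →L[ℂ] H) (hL : L.IsPositive)
    (f : H) (lam : ℝ) (hlam : 0 < lam) :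
    letI T : H →L[ℂ] H := ContinuousLinearMap.adjoint S ∘L S
    letI P : H →L[ℂ] H :=
      (ContinuousLinearMap.adjoint S) ∘L
        (Ring.inverse (S ∘L ContinuousLinearMap.adjoint S)) ∘L S
    letI Q : ℝ := ‖opow (T + (lam : ℂ) • (1 : H →L[ℂ] H)) (-(1 / 2)) ∘L
        opow (L + (lam : ℂ) • (1 : H →L[ℂ] H)) (1 / 2)‖
    ‖(opow L (1 / 2)) (P f - f)‖ ≤ lam ^ ((1 : ℝ) / 2) * Q * ‖f‖ := by
  set T : H →L[ℂ] H := ContinuousLinearMap.adjoint S ∘L S with hTdef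
  set P : H →L[ℂ] H := (ContinuousLinearMap.adjoint S) ∘L
      (Ring.inverse (S ∘L ContinuousLinearMap.adjoint S)) ∘L S with hPdef
  set Q : ℝ := ‖opow (T + (lam : ℂ) • (1 : H →L[ℂ] H)) (-(1 / 2)) ∘L
      opow (L + (lam : ℂ) • (1 : H →L[ℂ] H)) (1 / 2)‖ with hQdef
  have hTpos : T.IsPositive := by
    have h := (isPositive_one (E := EuclideanSpace ℂ (Fin m))).adjoint_conj S
    simp only [ContinuousLinearMap.one_def, ContinuousLinearMap.id_comp] at h
    exact h
  have hSP : S ∘L P = S := by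
    rw [hPdef, ← ContinuousLinearMap.comp_assoc, ← ContinuousLinearMap.comp_assoc,
      show (S ∘L adjoint S) ∘L Ring.inverse (S ∘L adjoint S) = 1 from
        Ring.mul_inverse_cancel _ hinv,
      ContinuousLinearMap.one_def, ContinuousLinearMap.id_comp]
  set g : H := P f - f with hgdef
  have hSg : S g = 0 := by
    have h1 : S (P f) = S f := by
      conv_rhs => rw [← hSP]
      rfl
    simp [hgdef, map_sub, h1]
  have hTg : T g = 0 := by
    show adjoint S (S g) = 0
    rw [hSg, map_zero]
  -- P is an orthogonal projection
  have hPidem : P ∘L P = P := by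
    conv_lhs => rw [hPdef]
    rw [ContinuousLinearMap.comp_assoc, ContinuousLinearMap.comp_assoc, hSP]
  have hPsa : IsSelfAdjoint P := by
    rw [isSelfAdjoint_iff, star_eq_adjoint]
    conv_lhs => rw [hPdef]
    rw [adjoint_comp, adjoint_comp, adjoint_adjoint]
    have hstar : adjoint (Ring.inverse (S ∘L adjoint S)) = Ring.inverse (S ∘L adjoint S) := by
      rw [← star_eq_adjoint, ← Ring.inverse_star]
      congr 1
      rw [star_eq_adjoint, adjoint_comp, adjoint_adjoint]
    rw [hstar, ContinuousLinearMap.comp_assoc, ← hPdef]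
  have hPg : P g = 0 := by
    have : P (P f) = P f := by
      conv_rhs => rw [← hPidem]
      rfl
    simp [hgdef, map_sub, this]
  have hfg : ‖g‖ ≤ ‖f‖ := by
    have hfdec : f = P f - g := by simp [hgdef]
    have hinn : (inner ℂ (P f) g : ℂ) = 0 := by
      rw [← hPsa.adjoint_eq, adjoint_inner_left, hPg, inner_zero_right]
    have hsq : ‖f‖ ^ 2 = ‖P f‖ ^ 2 - 2 * RCLike.re (inner ℂ (P f) g : ℂ) + ‖g‖ ^ 2 := by
      conv_lhs => rw [hfdec]
      exact norm_sub_sq (𝕜 := ℂ) _ _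
    rw [hinn] at hsq
    simp only [map_zero, mul_zero, sub_zero] at hsq
    nlinarith [norm_nonneg (P f), norm_nonneg g, norm_nonneg f]
  -- positivity of shifted operators
  set A1 : H →L[ℂ] H := T + (lam : ℂ) • (1 : H →L[ℂ] H) with hA1def
  set A2 : H →L[ℂ] H := L + (lam : ℂ) • (1 : H →L[ℂ] H) with hA2def
  have hA1 : A1.IsPositive := hTpos.add (isPositive_smul_one hlam.le)
  have hA2 : A2.IsPositive := hL.add (isPositive_smul_one hlam.le)
  have hsp1 : ∀ x ∈ spectrum ℝ A1, 0 < x := spectrum_pos_add hTpos hlam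
  -- norms of half-power applications
  have reA1 : RCLike.re (inner ℂ (A1 g) g : ℂ) = lam * ‖g‖ ^ 2 := by
    rw [hA1def]
    simp only [ContinuousLinearMap.add_apply, ContinuousLinearMap.smul_apply,
      ContinuousLinearMap.one_apply, hTg, zero_add, inner_smul_left, Complex.conj_ofReal,
      inner_self_eq_norm_sq_to_K]
    rw [show ((lam:ℂ)) = (RCLike.ofReal lam : ℂ) from rfl, RCLike.re_ofReal_mul,
      ← RCLike.ofReal_pow, RCLike.ofReal_re]
  have reA2 : RCLike.re (inner ℂ (A2 g) g : ℂ) =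
      RCLike.re (inner ℂ (L g) g : ℂ) + lam * ‖g‖ ^ 2 := by
    rw [hA2def]
    simp only [ContinuousLinearMap.add_apply, ContinuousLinearMap.smul_apply,
      ContinuousLinearMap.one_apply, inner_add_left, map_add, inner_smul_left,
      Complex.conj_ofReal, inner_self_eq_norm_sq_to_K]
    rw [show ((lam:ℂ)) = (RCLike.ofReal lam : ℂ) from rfl, RCLike.re_ofReal_mul,
      ← RCLike.ofReal_pow, RCLike.ofReal_re]
  -- step 1 : ‖L^{1/2} g‖ ≤ ‖A2^{1/2} g‖
  have step1 : ‖opow L (1/2) g‖ ≤ ‖opow A2 (1/2) g‖ := by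
    have h1 := norm_opow_half_sq hL g
    have h2 := norm_opow_half_sq hA2 g
    nlinarith [norm_nonneg (opow L (1/2) g), norm_nonneg (opow A2 (1/2) g),
      norm_nonneg g, sq_nonneg ‖g‖, mul_nonneg hlam.le (sq_nonneg ‖g‖)]
  -- step 3 : ‖A1^{1/2} g‖ = lam^{1/2} ‖g‖
  have step3 : ‖opow A1 (1/2) g‖ = lam ^ ((1:ℝ)/2) * ‖g‖ := by
    have h1 := norm_opow_half_sq hA1 g
    rw [reA1] at h1
    have hpow : (lam ^ ((1:ℝ)/2)) ^ 2 = lam := by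
      rw [← Real.rpow_natCast (lam ^ ((1:ℝ)/2)) 2, ← Real.rpow_mul hlam.le]
      norm_num
    have h2 : (lam ^ ((1:ℝ)/2) * ‖g‖) ^ 2 = lam * ‖g‖ ^ 2 := by
      rw [mul_pow, hpow]
    have hnn1 : (0:ℝ) ≤ ‖opow A1 (1/2) g‖ := norm_nonneg _
    have hnn2 : (0:ℝ) ≤ lam ^ ((1:ℝ)/2) * ‖g‖ :=
      mul_nonneg (Real.rpow_nonneg hlam.le _) (norm_nonneg _)
    nlinarith [h1, h2]
  -- step 2 : factor through A1
  have hker : opow A1 (-(1/2)) * opow A1 (1/2) = 1 := opow_neg_half_mul_half hA1 hsp1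
  have hfac : opow A2 (1/2) g = (opow A2 (1/2) * opow A1 (-(1/2))) ((opow A1 (1/2)) g) := by
    have h : opow A2 (1/2) * opow A1 (-(1/2)) * opow A1 (1/2) = opow A2 (1/2) := by
      rw [mul_assoc, hker, mul_one]
    conv_lhs => rw [← h]
    simp [ContinuousLinearMap.mul_apply]
  have hQ : ‖opow A2 (1/2) * opow A1 (-(1/2))‖ = Q := by
    have hadj : adjoint (opow A2 (1/2) * opow A1 (-(1/2))) =
        opow A1 (-(1/2)) ∘L opow A2 (1/2) := by
      rw [show opow A2 (1/2) * opow A1 (-(1/2)) = opow A2 (1/2) ∘L opow A1 (-(1/2)) from rfl,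
        adjoint_comp, (opow_selfAdjoint A1 (-(1/2))).adjoint_eq,
        (opow_selfAdjoint A2 (1/2)).adjoint_eq]
    calc ‖opow A2 (1/2) * opow A1 (-(1/2))‖
        = ‖adjoint (opow A2 (1/2) * opow A1 (-(1/2)))‖ :=
          (LinearIsometryEquiv.norm_map (adjoint (𝕜 := ℂ) (E := H) (F := H)) _).symm
      _ = Q := by rw [hadj]
  have step2 : ‖opow A2 (1/2) g‖ ≤ Q * (lam ^ ((1:ℝ)/2) * ‖g‖) := by
    rw [hfac, ← hQ, ← step3]
    exact le_opNorm _ _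
  have hQnn : 0 ≤ Q := norm_nonneg _
  calc ‖opow L (1/2) g‖ ≤ ‖opow A2 (1/2) g‖ := step1
    _ ≤ Q * (lam ^ ((1:ℝ)/2) * ‖g‖) := step2
    _ = lam ^ ((1:ℝ)/2) * Q * ‖g‖ := by ring
    _ ≤ lam ^ ((1:ℝ)/2) * Q * ‖f‖ := by
        apply mul_le_mul_of_nonneg_left hfg
        exact mul_nonneg (Real.rpow_nonneg hlam.le _) hQnn
end

section
/- Let 0 ≤ r < 1/2, let h ∈ 𝓔, set f* := 𝓛^r h, let v ∈ ℂ^m, and define f_λ := (L + λI)⁻¹ ι* f* and f_{D,λ} := (T + λI)⁻¹ S* v for λ > 0. Then for every λ > 0: ‖ι (f_λ − f_{D,λ})‖_𝓔 ≤ λ^{r−1/2} Q_λ² W_λ ‖h‖ + Q_λ² U_λ. -/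
open ContinuousLinearMap

open scoped InnerProductSpace

namespace RegAux

variable {F : Type*} [NormedAddCommGroup F] [InnerProductSpace ℂ F] [CompleteSpace F]

lemma isSelfAdjoint_of_nonneg {a : F →L[ℂ] F} (ha : 0 ≤ a) : IsSelfAdjoint a :=
  ((ContinuousLinearMap.nonneg_iff_isPositive a).mp ha).isSelfAdjoint

lemma spec_subset {a : F →L[ℂ] F} (ha : 0 ≤ a) : spectrum ℝ a ⊆ {x : ℝ | 0 ≤ x} :=
  fun x hx => spectrum_nonneg_of_nonneg ha hx

lemma contOn_pos_rpow (s : ℝ) : ContinuousOn (fun x : ℝ => x ^ s) {x : ℝ | 0 < x} :=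
  ContinuousOn.rpow_const continuousOn_id (fun x hx => Or.inl (ne_of_gt hx))

lemma contOn_rpow (r : ℝ) (hr : 0 ≤ r) : ContinuousOn (fun x : ℝ => x ^ r) {x : ℝ | 0 ≤ x} :=
  ContinuousOn.rpow_const continuousOn_id (fun _ _ => Or.inr hr)

lemma contOn_shift_rpow (lam s : ℝ) (hlam : 0 < lam) :
    ContinuousOn (fun x : ℝ => (x + lam) ^ s) {x : ℝ | 0 ≤ x} := by
  apply ContinuousOn.rpow_const (by fun_prop)
  intro x hx
  have hx' : (0:ℝ) ≤ x := hx
  exact Or.inl (by positivity)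

lemma contOn_shift_inv (lam : ℝ) (hlam : 0 < lam) :
    ContinuousOn (fun x : ℝ => (x + lam)⁻¹) {x : ℝ | 0 ≤ x} := by
  apply ContinuousOn.inv₀ (by fun_prop)
  intro x hx
  have hx' : (0:ℝ) ≤ x := hx
  positivity

variable {a : F →L[ℂ] F} {lam : ℝ}

lemma cfc_shift (ha : 0 ≤ a) (lam : ℝ) :
    a + (lam : ℂ) • 1 = cfc (fun x : ℝ => x + lam) a := by
  rw [cfc_add (a := a) (fun x : ℝ => x) (fun _ => lam), cfc_id' ℝ a (isSelfAdjoint_of_nonneg ha),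
    cfc_const lam a (isSelfAdjoint_of_nonneg ha)]
  congr 1


lemma opow_shift (ha : 0 ≤ a) (hlam : 0 < lam) (s : ℝ) :
    opow (a + (lam : ℂ) • 1) s = cfc (fun x : ℝ => (x + lam) ^ s) a := by
  rw [cfc_shift ha lam, opow, ← cfc_comp (fun x : ℝ => x ^ s) (fun x : ℝ => x + lam) a
    (isSelfAdjoint_of_nonneg ha)
    ((contOn_pos_rpow s).mono (by
      rintro y ⟨x, hx, rfl⟩
      have hx' : (0:ℝ) ≤ x := spec_subset ha hx
      exact Set.mem_setOf_eq ▸ (by positivity)))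
    ((by fun_prop : ContinuousOn (fun x : ℝ => x + lam) (Set.univ)).mono (Set.subset_univ _))]
  rfl

/-- combine two cfc's of `a` by multiplying the functions. -/
lemma cfc_mul_eq (ha : 0 ≤ a) (f g h : ℝ → ℝ)
    (hf : ContinuousOn f {x : ℝ | 0 ≤ x}) (hg : ContinuousOn g {x : ℝ | 0 ≤ x})
    (hfg : ∀ x ∈ {x : ℝ | 0 ≤ x}, f x * g x = h x) :
    cfc f a * cfc g a = cfc h a := by
  rw [← cfc_mul f g a (hf.mono (spec_subset ha)) (hg.mono (spec_subset ha))]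
  exact cfc_congr (fun x hx => hfg x (spec_subset ha hx))


lemma shift_pos_on_spec (hlam : 0 < lam) : ∀ x ∈ {x : ℝ | 0 ≤ x}, (0:ℝ) < x + lam := by
  intro x hx
  have hx' : (0:ℝ) ≤ x := hx
  positivity

lemma shift_mul_inv (ha : 0 ≤ a) (hlam : 0 < lam) :
    (a + (lam : ℂ) • 1) * cfc (fun x : ℝ => (x + lam)⁻¹) a = 1 := by
  rw [cfc_shift ha lam, cfc_mul_eq ha _ _ (fun _ => 1) (by fun_prop) (contOn_shift_inv lam hlam)
    (fun x hx => mul_inv_cancel₀ (ne_of_gt (shift_pos_on_spec hlam x hx)))]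
  exact cfc_const_one ℝ a (isSelfAdjoint_of_nonneg ha)

lemma inv_mul_shift (ha : 0 ≤ a) (hlam : 0 < lam) :
    cfc (fun x : ℝ => (x + lam)⁻¹) a * (a + (lam : ℂ) • 1) = 1 := by
  rw [cfc_shift ha lam, cfc_mul_eq ha _ _ (fun _ => 1) (contOn_shift_inv lam hlam) (by fun_prop)
    (fun x hx => inv_mul_cancel₀ (ne_of_gt (shift_pos_on_spec hlam x hx)))]
  exact cfc_const_one ℝ a (isSelfAdjoint_of_nonneg ha)

noncomputable def shiftUnit (ha : 0 ≤ a) (hlam : 0 < lam) : (F →L[ℂ] F)ˣ where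
  val := a + (lam : ℂ) • 1
  inv := cfc (fun x : ℝ => (x + lam)⁻¹) a
  val_inv := shift_mul_inv ha hlam
  inv_val := inv_mul_shift ha hlam

lemma isUnit_shift (ha : 0 ≤ a) (hlam : 0 < lam) : IsUnit (a + (lam : ℂ) • 1) :=
  ⟨shiftUnit ha hlam, rfl⟩

lemma inverse_shift (ha : 0 ≤ a) (hlam : 0 < lam) :
    Ring.inverse (a + (lam : ℂ) • 1) = cfc (fun x : ℝ => (x + lam)⁻¹) a :=
  Ring.inverse_unit (shiftUnit ha hlam)

lemma isSelfAdjoint_inverse_shift (ha : 0 ≤ a) (hlam : 0 < lam) :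
    IsSelfAdjoint (Ring.inverse (a + (lam : ℂ) • 1)) := by
  rw [inverse_shift ha hlam]; exact cfc_predicate _ a

lemma isSelfAdjoint_opow (A : F →L[ℂ] F) (s : ℝ) : IsSelfAdjoint (opow A s) :=
  cfc_predicate _ A

-- opow (1/2) * opow (1/2) = shift
lemma opow_half_mul_half (ha : 0 ≤ a) (hlam : 0 < lam) :
    opow (a + (lam : ℂ) • 1) (1/2) * opow (a + (lam : ℂ) • 1) (1/2)
      = a + (lam : ℂ) • 1 := by
  rw [opow_shift ha hlam, cfc_mul_eq ha _ _ (fun x => x + lam)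
    (contOn_shift_rpow lam _ hlam) (contOn_shift_rpow lam _ hlam) (fun x hx => ?_),
    cfc_shift ha lam]
  rw [← Real.rpow_add (shift_pos_on_spec hlam x hx)]
  norm_num

lemma opow_half_mul_neg_half (ha : 0 ≤ a) (hlam : 0 < lam) :
    opow (a + (lam : ℂ) • 1) (1/2) * opow (a + (lam : ℂ) • 1) (-(1/2)) = 1 := by
  rw [opow_shift ha hlam, opow_shift ha hlam, cfc_mul_eq ha _ _ (fun _ => 1)
    (contOn_shift_rpow lam _ hlam) (contOn_shift_rpow lam _ hlam) (fun x hx => ?_)]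
  · exact cfc_const_one ℝ a (isSelfAdjoint_of_nonneg ha)
  rw [← Real.rpow_add (shift_pos_on_spec hlam x hx)]
  norm_num

lemma opow_neg_half_mul_neg_half (ha : 0 ≤ a) (hlam : 0 < lam) :
    opow (a + (lam : ℂ) • 1) (-(1/2)) * opow (a + (lam : ℂ) • 1) (-(1/2))
      = Ring.inverse (a + (lam : ℂ) • 1) := by
  rw [opow_shift ha hlam, cfc_mul_eq ha _ _ (fun x => (x + lam)⁻¹)
    (contOn_shift_rpow lam _ hlam) (contOn_shift_rpow lam _ hlam) (fun x hx => ?_),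
    inverse_shift ha hlam]
  rw [← Real.rpow_add (shift_pos_on_spec hlam x hx)]
  norm_num [Real.rpow_neg_one]

-- selfadjoint inner move
lemma sa_inner {B : F →L[ℂ] F} (hB : IsSelfAdjoint B) (x y : F) :
    ⟪B x, y⟫_ℂ = ⟪x, B y⟫_ℂ := by
  conv_lhs => rw [← hB.adjoint_eq]
  exact ContinuousLinearMap.adjoint_inner_left B y x

lemma norm_sq_eq_re_inner (x : F) : ‖x‖ ^ 2 = RCLike.re ⟪x, x⟫_ℂ :=
  (inner_self_eq_norm_sq (𝕜 := ℂ) x).symm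

lemma norm_opow_half_sq (ha : 0 ≤ a) (hlam : 0 < lam) (x : F) :
    ‖opow (a + (lam : ℂ) • 1) (1/2) x‖ ^ 2
      = RCLike.re ⟪(a + (lam : ℂ) • 1) x, x⟫_ℂ := by
  have hAsa : IsSelfAdjoint (a + (lam : ℂ) • 1) := by
    rw [cfc_shift ha lam]; exact cfc_predicate _ a
  rw [norm_sq_eq_re_inner, sa_inner (isSelfAdjoint_opow _ _), sa_inner hAsa]
  congr 2
  rw [← ContinuousLinearMap.mul_apply, opow_half_mul_half ha hlam]


variable {H : Type*} [NormedAddCommGroup H] [InnerProductSpace ℂ H] [CompleteSpace H]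
variable {E : Type*} [NormedAddCommGroup E] [InnerProductSpace ℂ E] [CompleteSpace E]

lemma adjoint_comp_nonneg (ι : H →L[ℂ] E) : 0 ≤ ContinuousLinearMap.adjoint ι ∘L ι := by
  rw [ContinuousLinearMap.nonneg_iff_isPositive]
  refine ⟨(isSelfAdjoint_iff'.mpr (by rw [adjoint_comp, adjoint_adjoint]) :
    IsSelfAdjoint (ContinuousLinearMap.adjoint ι ∘L ι)).isSymmetric, fun x => ?_⟩
  rw [reApplyInnerSelf, comp_apply, adjoint_inner_left]
  exact inner_self_nonneg

lemma comp_adjoint_nonneg (ι : H →L[ℂ] E) : 0 ≤ ι ∘L ContinuousLinearMap.adjoint ι := by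
  have := adjoint_comp_nonneg (ContinuousLinearMap.adjoint ι)
  rwa [adjoint_adjoint] at this

lemma scalar_bound {r lam : ℝ} (hr : 0 ≤ r) (hr' : r < 1/2) (hlam : 0 < lam)
    {x : ℝ} (hx : 0 ≤ x) :
    |x ^ r * ((x + lam)⁻¹ * ((x + lam)⁻¹ * (x * x ^ r)))| ≤ lam ^ (2*r - 1) := by
  have hy : 0 < x + lam := by positivity
  rw [abs_of_nonneg (by positivity)]
  have step1 : x ^ r * ((x + lam)⁻¹ * ((x + lam)⁻¹ * (x * x ^ r)))
      ≤ (x + lam) ^ r * ((x + lam)⁻¹ * ((x + lam)⁻¹ * ((x + lam) * (x + lam) ^ r))) := by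
    have h1 : x ^ r ≤ (x + lam) ^ r := Real.rpow_le_rpow hx (by linarith) hr
    have h2 : x ≤ x + lam := by linarith
    gcongr
  have step2 : (x + lam) ^ r * ((x + lam)⁻¹ * ((x + lam)⁻¹ * ((x + lam) * (x + lam) ^ r)))
      = (x + lam) ^ (2*r - 1) := by
    have hne : x + lam ≠ 0 := ne_of_gt hy
    calc (x + lam) ^ r * ((x + lam)⁻¹ * ((x + lam)⁻¹ * ((x + lam) * (x + lam) ^ r)))
        = ((x + lam) ^ r * (x + lam) ^ r) * (x + lam)⁻¹ := by
          field_simp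
      _ = (x + lam) ^ (r + r) * (x + lam) ^ (-1 : ℝ) := by
          rw [← Real.rpow_add hy, Real.rpow_neg_one]
      _ = (x + lam) ^ (2*r - 1) := by rw [← Real.rpow_add hy]; ring_nf
  have step3 : (x + lam) ^ (2*r - 1) ≤ lam ^ (2*r - 1) :=
    Real.rpow_le_rpow_of_nonpos hlam (by linarith) (by linarith)
  linarith [step1, step2 ▸ step1]

lemma flam_bound (ι : H →L[ℂ] E) {r lam : ℝ} (hr : 0 ≤ r) (hr' : r < 1/2)
    (hlam : 0 < lam) (h : E) :
    ‖(Ring.inverse (ContinuousLinearMap.adjoint ι ∘L ι + (lam : ℂ) • 1))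
        ((ContinuousLinearMap.adjoint ι) (opow (ι ∘L ContinuousLinearMap.adjoint ι) r h))‖
      ≤ lam ^ (r - 1/2) * ‖h‖ := by
  set L : H →L[ℂ] H := ContinuousLinearMap.adjoint ι ∘L ι with hLdef
  set bigL : E →L[ℂ] E := ι ∘L ContinuousLinearMap.adjoint ι with hbigLdef
  have hL : 0 ≤ L := adjoint_comp_nonneg ι
  have hbigL : 0 ≤ bigL := comp_adjoint_nonneg ι
  have hbigLsa : IsSelfAdjoint bigL := isSelfAdjoint_of_nonneg hbigL
  set Ainv : H →L[ℂ] H := Ring.inverse (L + (lam:ℂ) • 1) with hAinvdef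
  set Minv : E →L[ℂ] E := Ring.inverse (bigL + (lam:ℂ) • 1) with hMinvdef
  set e : E := opow bigL r h with hedef
  set x0 : H := Ainv ((ContinuousLinearMap.adjoint ι) e) with hx0def
  have hAinvsa : IsSelfAdjoint Ainv := isSelfAdjoint_inverse_shift hL hlam
  -- intertwining
  have hIA : ∀ u : H, ι ((L + (lam:ℂ) • 1) u) = (bigL + (lam:ℂ) • 1) (ι u) := by
    intro u
    simp only [add_apply, smul_apply, one_apply, map_add, map_smul]
    rfl
  have hAappl : ∀ y : H, (L + (lam:ℂ) • 1) (Ainv y) = y := fun y => by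
    rw [hAinvdef, ← ContinuousLinearMap.mul_apply,
      Ring.mul_inverse_cancel _ (isUnit_shift hL hlam), ContinuousLinearMap.one_apply]
  have hMappl : ∀ z : E, Minv ((bigL + (lam:ℂ) • 1) z) = z := fun z => by
    rw [hMinvdef, ← ContinuousLinearMap.mul_apply,
      Ring.inverse_mul_cancel _ (isUnit_shift hbigL hlam), ContinuousLinearMap.one_apply]
  have hcomm : ∀ y : H, ι (Ainv y) = Minv (ι y) := fun y => by
    conv_rhs => rw [← hAappl y, hIA, hMappl]
  -- the inner-product computation
  have hcontf : ContinuousOn (fun x : ℝ => x ^ r) {x : ℝ | 0 ≤ x} := contOn_rpow r hr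
  have hcontm : ContinuousOn (fun x : ℝ => (x + lam)⁻¹) {x : ℝ | 0 ≤ x} :=
    contOn_shift_inv lam hlam
  have hxmul : bigL * cfc (fun x : ℝ => x ^ r) bigL
      = cfc (fun x : ℝ => x * x ^ r) bigL := by
    nth_rewrite 1 [← cfc_id' ℝ bigL hbigLsa]
    exact cfc_mul_eq hbigL (fun x => x) (fun x => x ^ r) (fun x => x * x ^ r)
      continuousOn_id hcontf (fun x hx => rfl)
  have hm1 : cfc (fun x : ℝ => (x + lam)⁻¹) bigL * cfc (fun x : ℝ => x * x ^ r) bigL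
      = cfc (fun x : ℝ => (x + lam)⁻¹ * (x * x ^ r)) bigL :=
    cfc_mul_eq hbigL _ _ _ hcontm (continuousOn_id.mul hcontf) (fun x hx => rfl)
  have hm2 : cfc (fun x : ℝ => (x + lam)⁻¹) bigL
        * cfc (fun x : ℝ => (x + lam)⁻¹ * (x * x ^ r)) bigL
      = cfc (fun x : ℝ => (x + lam)⁻¹ * ((x + lam)⁻¹ * (x * x ^ r))) bigL :=
    cfc_mul_eq hbigL _ _ _ hcontm (hcontm.mul (continuousOn_id.mul hcontf)) (fun x hx => rfl)
  have hm3 : cfc (fun x : ℝ => x ^ r) bigL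
        * cfc (fun x : ℝ => (x + lam)⁻¹ * ((x + lam)⁻¹ * (x * x ^ r))) bigL
      = cfc (fun x : ℝ => x ^ r * ((x + lam)⁻¹ * ((x + lam)⁻¹ * (x * x ^ r)))) bigL :=
    cfc_mul_eq hbigL _ _ _ hcontf (hcontm.mul (hcontm.mul (continuousOn_id.mul hcontf)))
      (fun x hx => rfl)
  have hprod : cfc (fun x : ℝ => x ^ r) bigL
        * (Minv * (Minv * (bigL * cfc (fun x : ℝ => x ^ r) bigL)))
      = cfc (fun x : ℝ => x ^ r * ((x + lam)⁻¹ * ((x + lam)⁻¹ * (x * x ^ r)))) bigL := by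
    rw [hxmul, hMinvdef, inverse_shift hbigL hlam, hm1, hm2, hm3]
  have hinner : RCLike.re ⟪x0, x0⟫_ℂ = RCLike.re
      ⟪h, cfc (fun x : ℝ => x ^ r * ((x + lam)⁻¹ * ((x + lam)⁻¹ * (x * x ^ r)))) bigL h⟫_ℂ := by
    have e1 : ⟪x0, x0⟫_ℂ = ⟪(ContinuousLinearMap.adjoint ι) e, Ainv x0⟫_ℂ :=
      sa_inner hAinvsa _ _
    have e2 : ⟪(ContinuousLinearMap.adjoint ι) e, Ainv x0⟫_ℂ = ⟪e, ι (Ainv x0)⟫_ℂ :=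
      ContinuousLinearMap.adjoint_inner_left ι _ e
    have e3 : ι (Ainv x0) = Minv (Minv (ι ((ContinuousLinearMap.adjoint ι) e))) := by
      rw [hcomm, hx0def, hcomm]
    have e4 : ι ((ContinuousLinearMap.adjoint ι) e) = bigL e := rfl
    have e5 : e = cfc (fun x : ℝ => x ^ r) bigL h := rfl
    have e6 : Minv (Minv (bigL e))
        = (Minv * (Minv * (bigL * cfc (fun x : ℝ => x ^ r) bigL))) h := by
      rw [e5]; rfl
    rw [e1, e2, e3, e4, e6, e5,
      sa_inner (cfc_predicate (fun x : ℝ => x ^ r) bigL)]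
    congr 1
    rw [← ContinuousLinearMap.mul_apply
      (cfc (fun x : ℝ => x ^ r) bigL)
      (Minv * (Minv * (bigL * cfc (fun x : ℝ => x ^ r) bigL))), hprod]
  -- norm bound on cfc g bigL
  have hgnorm : ‖cfc (fun x : ℝ => x ^ r * ((x + lam)⁻¹ * ((x + lam)⁻¹ * (x * x ^ r)))) bigL‖
      ≤ lam ^ (2*r - 1) := by
    apply norm_cfc_le (Real.rpow_nonneg hlam.le _)
    intro x hx
    have hx' : (0:ℝ) ≤ x := spec_subset hbigL hx
    simpa only [Real.norm_eq_abs] using scalar_bound hr hr' hlam hx'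
  have hsq : ‖x0‖ ^ 2 ≤ (lam ^ (r - 1/2) * ‖h‖) ^ 2 := by
    set G := cfc (fun x : ℝ => x ^ r * ((x + lam)⁻¹ * ((x + lam)⁻¹ * (x * x ^ r)))) bigL
    have b1 : ‖x0‖ ^ 2 = RCLike.re ⟪h, G h⟫_ℂ := by
      rw [norm_sq_eq_re_inner, hinner]
    have b2 : RCLike.re ⟪h, G h⟫_ℂ ≤ ‖h‖ * ‖G h‖ := re_inner_le_norm _ _
    have b3 : ‖G h‖ ≤ ‖G‖ * ‖h‖ := le_opNorm _ _
    have b4 : (lam ^ (r - 1/2) * ‖h‖) ^ 2 = lam ^ (2*r - 1) * (‖h‖ * ‖h‖) := by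
      rw [mul_pow, ← Real.rpow_natCast (lam ^ (r - 1/2)) 2, ← Real.rpow_mul hlam.le]
      norm_num
      ring_nf
    nlinarith [norm_nonneg h, norm_nonneg (G h), opNorm_nonneg G,
      mul_le_mul_of_nonneg_left b3 (norm_nonneg h)]
  have hrhs : 0 ≤ lam ^ (r - 1/2) * ‖h‖ := by positivity
  have := Real.sqrt_le_sqrt hsq
  rwa [Real.sqrt_sq (norm_nonneg _), Real.sqrt_sq hrhs] at this

end RegAux

open RegAux

set_option maxHeartbeats 1000000

/-- Let `0 ≤ r < 1/2`, `h ∈ 𝓔`, `f* := 𝓛^r h`, `v ∈ ℂ^m`, and define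
`f_λ := (L + λI)⁻¹ ι* f*` and `f_{D,λ} := (T + λI)⁻¹ S* v` for `λ > 0`.  Then for
every `λ > 0`:  `‖ι (f_λ − f_{D,λ})‖ ≤ λ^{r−1/2} Q_λ² W_λ ‖h‖ + Q_λ² U_λ`, where
`T := S* S`, `L := ι* ι`, `𝓛 := ι ι*`, `Q_λ := ‖(T + λI)^{−1/2} (L + λI)^{1/2}‖`,
`W_λ := ‖(L + λI)^{−1/2} (T − L)‖` and `U_λ := ‖(L + λI)^{−1/2} (S* v − ι* f*)‖`. -/
theorem regularized_solutions_difference_bound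
    {H : Type*} [NormedAddCommGroup H] [InnerProductSpace ℂ H] [CompleteSpace H]
    {E : Type*} [NormedAddCommGroup E] [InnerProductSpace ℂ E] [CompleteSpace E]
    {m : ℕ} (hm : 0 < m)
    (S : H →L[ℂ] EuclideanSpace ℂ (Fin m))
    (hinv : IsUnit (S ∘L ContinuousLinearMap.adjoint S))
    (ι : H →L[ℂ] E)
    (r : ℝ) (hr : 0 ≤ r) (hr' : r < 1 / 2)
    (h : E) (v : EuclideanSpace ℂ (Fin m)) (lam : ℝ) (hlam : 0 < lam) :
    letI T : H →L[ℂ] H := ContinuousLinearMap.adjoint S ∘L S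
    letI L : H →L[ℂ] H := ContinuousLinearMap.adjoint ι ∘L ι
    letI bigL : E →L[ℂ] E := ι ∘L ContinuousLinearMap.adjoint ι
    letI fstar : E := (opow bigL r) h
    letI flam : H :=
      (Ring.inverse (L + (lam : ℂ) • (1 : H →L[ℂ] H)))
        ((ContinuousLinearMap.adjoint ι) fstar)
    letI fDlam : H :=
      (Ring.inverse (T + (lam : ℂ) • (1 : H →L[ℂ] H)))
        ((ContinuousLinearMap.adjoint S) v)
    letI Q : ℝ := ‖opow (T + (lam : ℂ) • (1 : H →L[ℂ] H)) (-(1 / 2)) ∘L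
        opow (L + (lam : ℂ) • (1 : H →L[ℂ] H)) (1 / 2)‖
    letI W : ℝ := ‖opow (L + (lam : ℂ) • (1 : H →L[ℂ] H)) (-(1 / 2)) ∘L (T - L)‖
    letI U : ℝ := ‖(opow (L + (lam : ℂ) • (1 : H →L[ℂ] H)) (-(1 / 2)))
        ((ContinuousLinearMap.adjoint S) v - (ContinuousLinearMap.adjoint ι) fstar)‖
    ‖ι (flam - fDlam)‖ ≤
      lam ^ (r - 1 / 2) * Q ^ (2 : ℕ) * W * ‖h‖ + Q ^ (2 : ℕ) * U := by
  set T : H →L[ℂ] H := ContinuousLinearMap.adjoint S ∘L S with hTd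
  set L : H →L[ℂ] H := ContinuousLinearMap.adjoint ι ∘L ι with hLd
  set bigL : E →L[ℂ] E := ι ∘L ContinuousLinearMap.adjoint ι with hbigLd
  set fstar : E := (opow bigL r) h with hfstard
  set Aop : H →L[ℂ] H := L + (lam : ℂ) • 1 with hAopd
  set Bop : H →L[ℂ] H := T + (lam : ℂ) • 1 with hBopd
  set flam : H := (Ring.inverse Aop) ((ContinuousLinearMap.adjoint ι) fstar) with hflamd
  set fDlam : H := (Ring.inverse Bop) ((ContinuousLinearMap.adjoint S) v) with hfDlamd
  set Asq : H →L[ℂ] H := opow Aop (1 / 2) with hAsqd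
  set Asinv : H →L[ℂ] H := opow Aop (-(1 / 2)) with hAsinvd
  set Bsinv : H →L[ℂ] H := opow Bop (-(1 / 2)) with hBsinvd
  set Q : ℝ := ‖Bsinv.comp Asq‖ with hQd
  set W : ℝ := ‖Asinv.comp (T - L)‖ with hWd
  set wv : H := (ContinuousLinearMap.adjoint S) v - (ContinuousLinearMap.adjoint ι) fstar
    with hwvd
  set U : ℝ := ‖Asinv wv‖ with hUd
  have hT : 0 ≤ T := adjoint_comp_nonneg S
  have hL : 0 ≤ L := adjoint_comp_nonneg ι
  set D : H := flam - fDlam with hDd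
  set z : H := (T - L) flam - wv with hzd
  -- Step 1 : D = Ring.inverse Bop z
  have hBappl : ∀ y : H, Ring.inverse Bop (Bop y) = y := fun y => by
    rw [← ContinuousLinearMap.mul_apply,
      Ring.inverse_mul_cancel _ (isUnit_shift hT hlam), ContinuousLinearMap.one_apply]
  have hAappl : Aop flam = (ContinuousLinearMap.adjoint ι) fstar := by
    rw [hflamd, ← ContinuousLinearMap.mul_apply,
      Ring.mul_inverse_cancel _ (isUnit_shift hL hlam), ContinuousLinearMap.one_apply]
  have hBflam : Bop flam = (T - L) flam + (ContinuousLinearMap.adjoint ι) fstar := by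
    rw [← hAappl, hAopd, hBopd]
    simp only [sub_apply, add_apply, smul_apply, one_apply]
    abel
  have hBfD : Bop fDlam = (ContinuousLinearMap.adjoint S) v := by
    rw [hfDlamd, ← ContinuousLinearMap.mul_apply,
      Ring.mul_inverse_cancel _ (isUnit_shift hT hlam), ContinuousLinearMap.one_apply]
  have hBD : Bop D = z := by
    rw [hDd, map_sub, hBflam, hBfD, hzd, hwvd]
    abel
  have hD : D = Ring.inverse Bop z := by rw [← hBD, hBappl]
  -- Step 2 : ‖ι D‖ ≤ ‖Asq D‖
  have hstep2 : ‖ι D‖ ≤ ‖Asq D‖ := by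
    have h1 : ‖ι D‖ ^ 2 = RCLike.re ⟪L D, D⟫_ℂ := by
      rw [RegAux.norm_sq_eq_re_inner]
      congr 1
      exact (ContinuousLinearMap.adjoint_inner_left ι D (ι D)).symm
    have h2 : ‖Asq D‖ ^ 2 = RCLike.re ⟪Aop D, D⟫_ℂ := norm_opow_half_sq hL hlam D
    have h3 : ⟪Aop D, D⟫_ℂ = ⟪L D, D⟫_ℂ + (lam : ℂ) * ⟪D, D⟫_ℂ := by
      rw [hAopd]
      simp only [add_apply, smul_apply, one_apply, inner_add_left, inner_smul_left]
      norm_num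
    have h4 : RCLike.re ((lam : ℂ) * ⟪D, D⟫_ℂ) = lam * ‖D‖ ^ 2 := by
      rw [show ((lam : ℂ)) = (RCLike.ofReal lam : ℂ) from rfl, RCLike.re_ofReal_mul,
        ← RegAux.norm_sq_eq_re_inner]
    have hle : ‖ι D‖ ^ 2 ≤ ‖Asq D‖ ^ 2 := by
      rw [h1, h2, h3, map_add, h4]
      nlinarith [sq_nonneg ‖D‖]
    have := Real.sqrt_le_sqrt hle
    rwa [Real.sqrt_sq (norm_nonneg _), Real.sqrt_sq (norm_nonneg _)] at this
  -- Step 3 : factorization of Asq ∘ Bop⁻¹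
  have hfac : (Asq * Bsinv) * ((Bsinv * Asq) * Asinv) = Asq * Ring.inverse Bop := by
    simp only [mul_assoc]
    rw [opow_half_mul_neg_half hL hlam, mul_one, opow_neg_half_mul_neg_half hT hlam]
  have hQadj : Asq * Bsinv = ContinuousLinearMap.adjoint (Bsinv ∘L Asq) := by
    rw [adjoint_comp, (isSelfAdjoint_opow Bop (-(1/2))).adjoint_eq,
      (isSelfAdjoint_opow Aop (1/2)).adjoint_eq]
    rfl
  have hQnorm : ‖Asq * Bsinv‖ = Q := by
    rw [hQadj, hQd]
    exact ContinuousLinearMap.adjoint.norm_map _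
  have hstep3 : ‖Asq D‖ ≤ Q * (Q * ‖Asinv z‖) := by
    rw [hD, ← ContinuousLinearMap.mul_apply, ← hfac]
    calc ‖((Asq * Bsinv) * ((Bsinv * Asq) * Asinv)) z‖
        = ‖(Asq * Bsinv) (((Bsinv * Asq) (Asinv z)))‖ := rfl
      _ ≤ ‖Asq * Bsinv‖ * ‖(Bsinv * Asq) (Asinv z)‖ := le_opNorm _ _
      _ ≤ ‖Asq * Bsinv‖ * (‖Bsinv * Asq‖ * ‖Asinv z‖) := by
          have := le_opNorm (Bsinv * Asq) (Asinv z)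
          have h0 : (0:ℝ) ≤ ‖Asq * Bsinv‖ := norm_nonneg _
          nlinarith
      _ = Q * (Q * ‖Asinv z‖) := by rw [hQnorm, hQd]; rfl
  -- Step 4 : ‖Asinv z‖ ≤ W * ‖flam‖ + U
  have hstep4 : ‖Asinv z‖ ≤ W * ‖flam‖ + U := by
    rw [hzd, map_sub]
    refine (norm_sub_le _ _).trans ?_
    have h5 : ‖Asinv ((T - L) flam)‖ ≤ W * ‖flam‖ := by
      rw [hWd]
      exact le_opNorm (Asinv ∘L (T - L)) flam
    linarith [h5]
  -- Step 5 : ‖flam‖ ≤ lam ^ (r - 1/2) * ‖h‖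
  have hstep5 : ‖flam‖ ≤ lam ^ (r - 1/2) * ‖h‖ := flam_bound ι hr hr' hlam h
  -- combine
  have hQ0 : (0:ℝ) ≤ Q := norm_nonneg _
  have hW0 : (0:ℝ) ≤ W := norm_nonneg _
  have hU0 : (0:ℝ) ≤ U := norm_nonneg _
  have c1 : ‖Asinv z‖ ≤ W * (lam ^ (r - 1/2) * ‖h‖) + U := by
    have := mul_le_mul_of_nonneg_left hstep5 hW0
    linarith
  have c2 : ‖ι D‖ ≤ Q * (Q * (W * (lam ^ (r - 1/2) * ‖h‖) + U)) := by
    have h6 : Q * ‖Asinv z‖ ≤ Q * (W * (lam ^ (r - 1/2) * ‖h‖) + U) :=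
      mul_le_mul_of_nonneg_left c1 hQ0
    have h7 : Q * (Q * ‖Asinv z‖) ≤ Q * (Q * (W * (lam ^ (r - 1/2) * ‖h‖) + U)) :=
      mul_le_mul_of_nonneg_left h6 hQ0
    linarith [hstep2, hstep3]
  calc ‖ι D‖ ≤ Q * (Q * (W * (lam ^ (r - 1/2) * ‖h‖) + U)) := c2
    _ = lam ^ (r - 1/2) * Q ^ 2 * W * ‖h‖ + Q ^ 2 * U := by ring
end

section
/- For every real r with 0 ≤ r ≤ 1, every h ∈ 𝓔 and every λ > 0: ‖𝓛^r h − ι (L + λI)⁻¹ ι* (𝓛^r h)‖_𝓔 ≤ λ^r ‖h‖. (This is the regularization-error bound ‖f* − f_λ‖_ρ ≤ λ^r ‖h*‖_ρ for f* = 𝓛^r h and f_λ := (L + λI)⁻¹ ι* f*.) -/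
open ContinuousLinearMap

set_option maxHeartbeats 1000000 in
/-- For every real `0 ≤ r ≤ 1`, every `h ∈ 𝓔` and every `λ > 0`:
`‖𝓛^r h − ι (L + λI)⁻¹ ι* (𝓛^r h)‖ ≤ λ^r ‖h‖`, where `ι : H → 𝓔` is a bounded linear
operator, `L := ι* ι` and `𝓛 := ι ι*`.  (This is the regularization-error bound
`‖f* − f_λ‖_ρ ≤ λ^r ‖h*‖_ρ` for `f* = 𝓛^r h` and `f_λ := (L + λI)⁻¹ ι* f*`.) -/
theorem regularization_error_bound
    {H : Type*} [NormedAddCommGroup H] [InnerProductSpace ℂ H] [CompleteSpace H]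
    {E : Type*} [NormedAddCommGroup E] [InnerProductSpace ℂ E] [CompleteSpace E]
    (ι : H →L[ℂ] E)
    (r : ℝ) (hr : 0 ≤ r) (hr' : r ≤ 1)
    (h : E) (lam : ℝ) (hlam : 0 < lam) :
    letI L : H →L[ℂ] H := ContinuousLinearMap.adjoint ι ∘L ι
    letI bigL : E →L[ℂ] E := ι ∘L ContinuousLinearMap.adjoint ι
    letI fstar : E := (opow bigL r) h
    ‖fstar - ι ((Ring.inverse (L + (lam : ℂ) • (1 : H →L[ℂ] H)))
        ((ContinuousLinearMap.adjoint ι) fstar))‖ ≤ lam ^ r * ‖h‖ := by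
  set L : H →L[ℂ] H := ContinuousLinearMap.adjoint ι ∘L ι with hLdef
  set A : E →L[ℂ] E := ι ∘L ContinuousLinearMap.adjoint ι with hAdef
  set F : E := (opow A r) h with hF0
  -- self-adjointness
  have hL_sa : IsSelfAdjoint L := by
    rw [IsSelfAdjoint, star_eq_adjoint, adjoint_comp, adjoint_adjoint]
  have hA_sa : IsSelfAdjoint A := by
    rw [IsSelfAdjoint, star_eq_adjoint, adjoint_comp, adjoint_adjoint]
  -- nonnegative spectra
  have hL_nonneg : (0 : H →L[ℂ] H) ≤ L := by
    rw [nonneg_iff_isPositive]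
    simpa [one_def] using (isPositive_one (E := E)).conj_adjoint (ContinuousLinearMap.adjoint ι)
  have hA_nonneg : (0 : E →L[ℂ] E) ≤ A := by
    rw [nonneg_iff_isPositive]
    simpa [one_def] using (isPositive_one (E := H)).conj_adjoint ι
  have hL_spec : ∀ x ∈ spectrum ℝ L, 0 ≤ x := spectrum_nonneg_of_nonneg hL_nonneg
  have hA_spec : ∀ x ∈ spectrum ℝ A, 0 ≤ x := spectrum_nonneg_of_nonneg hA_nonneg
  have hL_ne : ∀ x ∈ spectrum ℝ L, x + lam ≠ 0 := fun x hx => by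
    have := hL_spec x hx; positivity
  have hA_ne : ∀ x ∈ spectrum ℝ A, x + lam ≠ 0 := fun x hx => by
    have := hA_spec x hx; positivity
  have hcL : ContinuousOn (fun x : ℝ => (x + lam)⁻¹) (spectrum ℝ L) :=
    ContinuousOn.inv₀ (by fun_prop) hL_ne
  have hcA : ContinuousOn (fun x : ℝ => (x + lam)⁻¹) (spectrum ℝ A) :=
    ContinuousOn.inv₀ (by fun_prop) hA_ne
  -- shift identities
  have hshiftL : cfc (fun x : ℝ => x + lam) L = L + (lam : ℂ) • 1 := by
    rw [cfc_add (a := L) (fun x => x) (fun _ => lam) (by fun_prop) (by fun_prop),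
      cfc_id' ℝ L, cfc_const lam L, Algebra.algebraMap_eq_smul_one]
    norm_num [Complex.coe_smul]
  have hshiftA : cfc (fun x : ℝ => x + lam) A = A + (lam : ℂ) • 1 := by
    rw [cfc_add (a := A) (fun x => x) (fun _ => lam) (by fun_prop) (by fun_prop),
      cfc_id' ℝ A, cfc_const lam A, Algebra.algebraMap_eq_smul_one]
    norm_num [Complex.coe_smul]
  have hunitL : IsUnit (L + (lam : ℂ) • 1) := by
    rw [← hshiftL]; exact isUnit_cfc (fun x : ℝ => x + lam) L (by fun_prop) hL_sa hL_ne
  have hRinv : Ring.inverse (L + (lam : ℂ) • 1) = cfc (fun x : ℝ => (x + lam)⁻¹) L := by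
    rw [← hshiftL, ← cfc_inv (fun x : ℝ => x + lam) L hL_ne]
  set B := cfc (fun x : ℝ => (x + lam)⁻¹) A with hB
  have hBA : (A + (lam : ℂ) • 1) * B = 1 := by
    rw [← hshiftA, hB, ← cfc_mul (fun x : ℝ => x + lam) _ A (by fun_prop) hcA,
      ← cfc_one ℝ A]
    exact cfc_congr fun x hx => mul_inv_cancel₀ (hA_ne x hx)
  -- intertwining
  have step1 : ∀ v : E, (ContinuousLinearMap.adjoint ι) ((A + (lam : ℂ) • 1) v)
      = (L + (lam : ℂ) • 1) ((ContinuousLinearMap.adjoint ι) v) := by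
    intro v
    simp only [add_apply, smul_apply, map_add, map_smul, hAdef, hLdef, comp_apply, one_apply_eq_self]
  have hF : F = (A + (lam : ℂ) • 1) (B F) := by
    conv_lhs => rw [← one_apply_eq_self (F := E →L[ℂ] E) F, ← hBA, mul_apply_eq_comp]
  have step2 : ι ((Ring.inverse (L + (lam : ℂ) • 1))
      ((ContinuousLinearMap.adjoint ι) F)) = (A * B) F := by
    calc ι ((Ring.inverse (L + (lam : ℂ) • 1)) ((ContinuousLinearMap.adjoint ι) F))
        = ι ((Ring.inverse (L + (lam : ℂ) • 1))
            ((ContinuousLinearMap.adjoint ι) ((A + (lam : ℂ) • 1) (B F)))) := by rw [← hF]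
      _ = ι ((Ring.inverse (L + (lam : ℂ) • 1))
            ((L + (lam : ℂ) • 1) ((ContinuousLinearMap.adjoint ι) (B F)))) := by rw [step1]
      _ = ι ((Ring.inverse (L + (lam : ℂ) • 1) * (L + (lam : ℂ) • 1))
            ((ContinuousLinearMap.adjoint ι) (B F))) := by rw [mul_apply_eq_comp]
      _ = ι ((ContinuousLinearMap.adjoint ι) (B F)) := by
            rw [Ring.inverse_mul_cancel _ hunitL, one_apply_eq_self]
      _ = (A * B) F := rfl
  rw [step2]
  -- rewrite as a single cfc applied to h
  have hcp : ContinuousOn (fun x : ℝ => x ^ r) (spectrum ℝ A) :=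
    (Real.continuous_rpow_const hr).continuousOn
  have hAB : A * B = cfc (fun x : ℝ => x * (x + lam)⁻¹) A := by
    rw [cfc_mul (fun x : ℝ => x) _ A (by fun_prop) hcA, cfc_id' ℝ A]
  have hFdef : F = cfc (fun x : ℝ => x ^ r) A h := hF0.trans rfl
  have key : F - (A * B) F = cfc (fun x : ℝ => x ^ r - x * (x + lam)⁻¹ * x ^ r) A h := by
    rw [cfc_sub (a := A) (fun x => x ^ r) (fun x => x * (x + lam)⁻¹ * x ^ r) hcp
      (by exact ((continuousOn_id.mul hcA).mul hcp)),
      cfc_mul (fun x : ℝ => x * (x + lam)⁻¹) (fun x : ℝ => x ^ r) A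
        (by exact continuousOn_id.mul hcA) hcp, ← hAB, hFdef, sub_apply, mul_apply_eq_comp]
    rfl
  rw [key]
  -- norm estimate
  have hbound : ‖cfc (fun x : ℝ => x ^ r - x * (x + lam)⁻¹ * x ^ r) A‖ ≤ lam ^ r := by
    apply norm_cfc_le (by positivity)
    intro x hx
    have hx0 : 0 ≤ x := hA_spec x hx
    have hxl : 0 < x + lam := by positivity
    have heq : x ^ r - x * (x + lam)⁻¹ * x ^ r = x ^ r * lam / (x + lam) := by
      field_simp
      ring
    rw [heq, Real.norm_eq_abs, abs_of_nonneg (by positivity), div_le_iff₀ hxl]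
    have hgm : x ^ r * lam ^ (1 - r) ≤ x + lam := by
      calc x ^ r * lam ^ (1 - r) ≤ r * x + (1 - r) * lam :=
            Real.geom_mean_le_arith_mean2_weighted hr (by linarith) hx0 hlam.le (by ring)
        _ ≤ x + lam := by nlinarith
    calc x ^ r * lam = (x ^ r * lam ^ (1 - r)) * lam ^ r := by
          rw [mul_assoc, ← Real.rpow_add hlam]
          norm_num
      _ ≤ (x + lam) * lam ^ r := by
          apply mul_le_mul_of_nonneg_right hgm (Real.rpow_nonneg hlam.le r)
      _ = lam ^ r * (x + lam) := by ring
  calc ‖cfc (fun x : ℝ => x ^ r - x * (x + lam)⁻¹ * x ^ r) A h‖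
      ≤ ‖cfc (fun x : ℝ => x ^ r - x * (x + lam)⁻¹ * x ^ r) A‖ * ‖h‖ := le_opNorm _ _
    _ ≤ lam ^ r * ‖h‖ := mul_le_mul_of_nonneg_right hbound (norm_nonneg h)
end

section
/- For every real β > 1 and every real c₀ > 0 there exists a constant c₁ > 0 (depending only on β and c₀) such that for every λ with 0 < λ ≤ 1: ∑_{ℓ=1}^∞ c₀ ℓ^{−β} / (λ + c₀ ℓ^{−β}) ≤ c₁ λ^{−1/β}. (This bounds the effective dimension 𝒩(λ) of a positive operator whose eigenvalues satisfy σ_ℓ ≤ c₀ ℓ^{−β}.) -/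
open Finset Filter Topology Set

/-- Mean value estimate: for `x ≥ 1`, `(β-1) (x+1)^(-β) ≤ x^(1-β) - (x+1)^(1-β)`. -/
lemma mvt_rpow_step (β : ℝ) (hβ : 1 < β) (x : ℝ) (hx : 1 ≤ x) :
    (β - 1) * (x + 1) ^ (-β) ≤ x ^ (1 - β) - (x + 1) ^ (1 - β) := by
  have hx0 : (0:ℝ) < x := lt_of_lt_of_le one_pos hx
  have hxlt : x < x + 1 := by linarith
  obtain ⟨c, hc, hceq⟩ := exists_hasDerivAt_eq_slope (fun y => y ^ (1 - β))
      (fun y => (1 - β) * y ^ (1 - β - 1)) hxlt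
      (by
        apply ContinuousOn.rpow_const continuousOn_id
        intro y hy
        exact Or.inl (by simp only [id]; nlinarith [hy.1]))
      (by
        intro y hy
        exact Real.hasDerivAt_rpow_const (Or.inl (by nlinarith [hy.1])))
  have hc0 : 0 < c := lt_trans hx0 hc.1
  have h1 : (1 - β) * c ^ (1 - β - 1) = ((x+1) ^ (1-β) - x ^ (1-β)) / (x + 1 - x) := hceq
  have h2 : (1 - β - 1 : ℝ) = -β := by ring
  rw [h2] at h1
  have h3 : (x+1) ^ (1-β) - x ^ (1-β) = (1 - β) * c ^ (-β) := by
    rw [h1]; field_simp; ring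
  have h4 : (x + 1) ^ (-β) ≤ c ^ (-β) :=
    Real.rpow_le_rpow_of_nonpos hc0 hc.2.le (by linarith)
  nlinarith [h4]

/-- Telescoping sum: `∑_{n} ((n+N)^(1-β) - (n+N+1)^(1-β)) = N^(1-β)`. -/
lemma telescope_rpow (β : ℝ) (hβ : 1 < β) (N : ℕ) (hN : 1 ≤ N) :
    HasSum (fun n : ℕ => ((n + N : ℕ) : ℝ) ^ (1 - β) - ((n + N + 1 : ℕ) : ℝ) ^ (1 - β))
      ((N : ℝ) ^ (1 - β)) := by
  set g : ℕ → ℝ := fun k => ((k : ℕ) : ℝ) ^ (1 - β) with hg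
  have hanti : ∀ k m : ℕ, 1 ≤ k → k ≤ m → g m ≤ g k := by
    intro k m hk hkm
    exact Real.rpow_le_rpow_of_nonpos (by exact_mod_cast hk) (by exact_mod_cast hkm)
      (by linarith)
  have hnonneg : ∀ n : ℕ, 0 ≤ g (n + N) - g (n + N + 1) := by
    intro n
    have := hanti (n + N) (n + N + 1) (by omega) (by omega)
    linarith
  rw [hasSum_iff_tendsto_nat_of_nonneg hnonneg]
  have hsum : ∀ M : ℕ, ∑ i ∈ range M, (g (i + N) - g (i + N + 1)) = g N - g (M + N) := by
    intro M
    have := Finset.sum_range_sub' (fun i => g (i + N)) M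
    simpa [Nat.add_right_comm] using this
  simp only [hsum]
  have htend : Tendsto (fun M : ℕ => g (M + N)) atTop (𝓝 0) := by
    have h1 : Tendsto (fun x : ℝ => x ^ (-(β - 1))) atTop (𝓝 0) :=
      tendsto_rpow_neg_atTop (by linarith)
    have h2 : Tendsto (fun M : ℕ => ((M + N : ℕ) : ℝ)) atTop atTop :=
      tendsto_natCast_atTop_atTop.comp (tendsto_add_atTop_nat N)
    have := h1.comp h2
    simpa [hg, Function.comp_def, neg_sub] using this
  have := (tendsto_const_nhds (x := g N)).sub htend
  simpa using this

/-- Tail bound for the p-series. -/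
lemma tail_rpow_le (β : ℝ) (hβ : 1 < β) (N : ℕ) (hN : 1 ≤ N) :
    ∑' n : ℕ, ((n + N + 1 : ℕ) : ℝ) ^ (-β) ≤ (N : ℝ) ^ (1 - β) / (β - 1) := by
  have hβ1 : (0:ℝ) < β - 1 := by linarith
  have hptwise : ∀ n : ℕ, ((n + N + 1 : ℕ) : ℝ) ^ (-β) ≤
      (((n + N : ℕ) : ℝ) ^ (1 - β) - ((n + N + 1 : ℕ) : ℝ) ^ (1 - β)) / (β - 1) := by
    intro n
    have hx : (1:ℝ) ≤ ((n + N : ℕ) : ℝ) := by exact_mod_cast (by omega : 1 ≤ n + N)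
    have := mvt_rpow_step β hβ ((n + N : ℕ) : ℝ) hx
    rw [le_div_iff₀ hβ1]
    push_cast
    push_cast at this
    nlinarith [this]
  have hts := telescope_rpow β hβ N hN
  have hsum2 : Summable (fun n : ℕ =>
      (((n + N : ℕ) : ℝ) ^ (1 - β) - ((n + N + 1 : ℕ) : ℝ) ^ (1 - β)) / (β - 1)) :=
    (hts.summable).div_const _
  have hsum1 : Summable (fun n : ℕ => ((n + N + 1 : ℕ) : ℝ) ^ (-β)) := by
    apply Summable.of_nonneg_of_le (fun n => Real.rpow_nonneg (by positivity) _) hptwise hsum2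
  calc ∑' n : ℕ, ((n + N + 1 : ℕ) : ℝ) ^ (-β)
      ≤ ∑' n : ℕ, (((n + N : ℕ) : ℝ) ^ (1 - β) - ((n + N + 1 : ℕ) : ℝ) ^ (1 - β)) / (β - 1) :=
        hsum1.tsum_le_tsum hptwise hsum2
    _ = (N : ℝ) ^ (1 - β) / (β - 1) := by
        rw [tsum_div_const, hts.tsum_eq]

/-- For every real `β > 1` and every real `c₀ > 0` there exists a
constant `c₁ > 0` (depending only on `β` and `c₀`) such that for every `0 < λ ≤ 1`:
`∑_{ℓ=1}^∞ c₀ ℓ^{−β} / (λ + c₀ ℓ^{−β}) ≤ c₁ λ^{−1/β}`.  (This bounds the effective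
dimension `𝒩(λ)` of a positive operator whose eigenvalues satisfy `σ_ℓ ≤ c₀ ℓ^{−β}`.) -/
theorem effective_dimension_bound_polynomial_decay
    (β c₀ : ℝ) (hβ : 1 < β) (hc₀ : 0 < c₀) :
    ∃ c₁ : ℝ, 0 < c₁ ∧ ∀ lam : ℝ, 0 < lam → lam ≤ 1 →
      (∑' ℓ : ℕ+, c₀ * (ℓ : ℝ) ^ (-β) / (lam + c₀ * (ℓ : ℝ) ^ (-β))) ≤
        c₁ * lam ^ (-1 / β) := by
  have hβ0 : (0:ℝ) < β := by linarith
  have hβ1 : (0:ℝ) < β - 1 := by linarith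
  refine ⟨2 + c₀ / (β - 1), by positivity, ?_⟩
  intro lam hlam hlam1
  set μ : ℝ := lam ^ (-1 / β) with hμ
  have hμpos : 0 < μ := Real.rpow_pos_of_pos hlam _
  have hμ1 : 1 ≤ μ :=
    Real.one_le_rpow_of_pos_of_le_one_of_nonpos hlam hlam1
      (by rw [neg_div]; exact neg_nonpos.mpr (by positivity))
  set N : ℕ := ⌈μ⌉₊ with hN
  have hN1 : 1 ≤ N := Nat.one_le_ceil_iff.mpr hμpos
  have hNge : μ ≤ (N : ℝ) := Nat.le_ceil μ
  have hNle : (N : ℝ) ≤ 2 * μ := by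
    have := Nat.ceil_lt_add_one (le_of_lt hμpos)
    push_cast at this ⊢
    linarith
  -- the summand over ℕ
  set f : ℕ → ℝ := fun n =>
    c₀ * ((n + 1 : ℕ) : ℝ) ^ (-β) / (lam + c₀ * ((n + 1 : ℕ) : ℝ) ^ (-β)) with hf
  have hposn : ∀ n : ℕ, (0:ℝ) < ((n + 1 : ℕ) : ℝ) := by
    intro n; exact_mod_cast Nat.succ_pos n
  have hapos : ∀ n : ℕ, 0 < c₀ * ((n + 1 : ℕ) : ℝ) ^ (-β) := by
    intro n; positivity
  have hfnonneg : ∀ n : ℕ, 0 ≤ f n := by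
    intro n
    have := hapos n
    have hden : 0 < lam + c₀ * ((n + 1 : ℕ) : ℝ) ^ (-β) := by positivity
    exact div_nonneg (this.le) hden.le
  have hfle1 : ∀ n : ℕ, f n ≤ 1 := by
    intro n
    have hden : 0 < lam + c₀ * ((n + 1 : ℕ) : ℝ) ^ (-β) := by
      have := hapos n; positivity
    rw [hf, div_le_one hden]
    linarith
  have hflelam : ∀ n : ℕ, f n ≤ (c₀ / lam) * ((n + 1 : ℕ) : ℝ) ^ (-β) := by
    intro n
    have ha := hapos n
    have hden : 0 < lam + c₀ * ((n + 1 : ℕ) : ℝ) ^ (-β) := by positivity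
    rw [hf]
    have h1 : c₀ * ((n + 1 : ℕ) : ℝ) ^ (-β) / (lam + c₀ * ((n + 1 : ℕ) : ℝ) ^ (-β)) ≤
        c₀ * ((n + 1 : ℕ) : ℝ) ^ (-β) / lam :=
      div_le_div_of_nonneg_left ha.le hlam (by linarith)
    calc c₀ * ((n + 1 : ℕ) : ℝ) ^ (-β) / (lam + c₀ * ((n + 1 : ℕ) : ℝ) ^ (-β))
        ≤ c₀ * ((n + 1 : ℕ) : ℝ) ^ (-β) / lam := h1
      _ = (c₀ / lam) * ((n + 1 : ℕ) : ℝ) ^ (-β) := by ring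
  -- summability
  have hsumrpow : Summable (fun n : ℕ => ((n + 1 : ℕ) : ℝ) ^ (-β)) := by
    have h0 : Summable (fun n : ℕ => (n : ℝ) ^ (-β)) :=
      Real.summable_nat_rpow.mpr (by linarith)
    exact (summable_nat_add_iff 1).mpr h0
  have hsumf : Summable f :=
    Summable.of_nonneg_of_le hfnonneg hflelam (hsumrpow.mul_left _)
  -- convert the ℕ+ sum to an ℕ sum
  have hconv : (∑' ℓ : ℕ+, c₀ * (ℓ : ℝ) ^ (-β) / (lam + c₀ * (ℓ : ℝ) ^ (-β))) =
      ∑' n : ℕ, f n := by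
    rw [← Equiv.pnatEquivNat.symm.tsum_eq
      (fun ℓ : ℕ+ => c₀ * (ℓ : ℝ) ^ (-β) / (lam + c₀ * (ℓ : ℝ) ^ (-β)))]
    apply tsum_congr
    intro n
    have : ((Equiv.pnatEquivNat.symm n : ℕ+) : ℝ) = ((n + 1 : ℕ) : ℝ) := by
      simp [Equiv.pnatEquivNat, Nat.succPNat]
    rw [hf]; rw [this]
  rw [hconv]
  -- split the sum
  have hsplit : ∑' n : ℕ, f n = ∑ i ∈ range N, f i + ∑' i : ℕ, f (i + N) :=
    (Summable.sum_add_tsum_nat_add N hsumf).symm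
  rw [hsplit]
  -- head bound
  have hhead : ∑ i ∈ range N, f i ≤ (N : ℝ) := by
    calc ∑ i ∈ range N, f i ≤ ∑ _i ∈ range N, (1:ℝ) :=
          Finset.sum_le_sum (fun i _ => hfle1 i)
      _ = (N : ℝ) := by simp
  -- tail bound
  have htail : ∑' i : ℕ, f (i + N) ≤ (c₀ / lam) * ((N : ℝ) ^ (1 - β) / (β - 1)) := by
    have hle : ∀ i : ℕ, f (i + N) ≤ (c₀ / lam) * ((i + N + 1 : ℕ) : ℝ) ^ (-β) := by
      intro i
      have := hflelam (i + N)
      simpa using this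
    have hsumtail1 : Summable (fun i : ℕ => f (i + N)) :=
      (summable_nat_add_iff N).mpr hsumf
    have hsumtail2 : Summable (fun i : ℕ => (c₀ / lam) * ((i + N + 1 : ℕ) : ℝ) ^ (-β)) := by
      apply Summable.mul_left
      have h0 : Summable (fun n : ℕ => (n : ℝ) ^ (-β)) :=
        Real.summable_nat_rpow.mpr (by linarith)
      have := (summable_nat_add_iff (N + 1)).mpr h0
      apply this.congr
      intro i
      rfl
    calc ∑' i : ℕ, f (i + N) ≤ ∑' i : ℕ, (c₀ / lam) * ((i + N + 1 : ℕ) : ℝ) ^ (-β) :=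
          hsumtail1.tsum_le_tsum hle hsumtail2
      _ = (c₀ / lam) * ∑' i : ℕ, ((i + N + 1 : ℕ) : ℝ) ^ (-β) := tsum_mul_left
      _ ≤ (c₀ / lam) * ((N : ℝ) ^ (1 - β) / (β - 1)) := by
          apply mul_le_mul_of_nonneg_left (tail_rpow_le β hβ N hN1) (by positivity)
  -- combine and compute
  have hNpow : (N : ℝ) ^ (1 - β) ≤ μ ^ (1 - β) :=
    Real.rpow_le_rpow_of_nonpos hμpos hNge (by linarith)
  have hμpow : μ ^ (1 - β) = lam ^ ((β - 1) / β) := by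
    rw [hμ, ← Real.rpow_mul hlam.le]
    congr 1
    field_simp
    ring
  have hkey : (c₀ / lam) * (lam ^ ((β - 1) / β) / (β - 1)) = (c₀ / (β - 1)) * μ := by
    have h1 : lam ^ ((β - 1) / β) / lam = lam ^ ((β - 1) / β - 1) := by
      rw [Real.rpow_sub hlam, Real.rpow_one]
    have h2 : (β - 1) / β - 1 = -1 / β := by
      field_simp
      ring
    have h3 : lam ^ ((β - 1) / β) / lam = μ := by
      rw [h1, h2]
    calc (c₀ / lam) * (lam ^ ((β - 1) / β) / (β - 1))
        = (c₀ / (β - 1)) * (lam ^ ((β - 1) / β) / lam) := by ring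
      _ = (c₀ / (β - 1)) * μ := by rw [h3]
  have htail2 : ∑' i : ℕ, f (i + N) ≤ (c₀ / (β - 1)) * μ := by
    calc ∑' i : ℕ, f (i + N) ≤ (c₀ / lam) * ((N : ℝ) ^ (1 - β) / (β - 1)) := htail
      _ ≤ (c₀ / lam) * (lam ^ ((β - 1) / β) / (β - 1)) := by
          gcongr
          rw [← hμpow]; exact hNpow
      _ = (c₀ / (β - 1)) * μ := hkey
  calc ∑ i ∈ range N, f i + ∑' i : ℕ, f (i + N)
      ≤ (N : ℝ) + (c₀ / (β - 1)) * μ := add_le_add hhead htail2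
    _ ≤ 2 * μ + (c₀ / (β - 1)) * μ := by linarith
    _ = (2 + c₀ / (β - 1)) * lam ^ (-1 / β) := by rw [← hμ]; ring
end

section
/- There exists an absolute constant C > 0 such that for every integer d ≥ 1, every real α > 0 and every λ with 0 < λ ≤ e^{−1}: ∑_{ℓ=1}^∞ 1 / (1 + λ e^{α ℓ^{1/d}}) ≤ C · d! · α^{−d} · (log(1/λ))^d. (This bounds the effective dimension 𝒩(λ) of a positive operator whose eigenvalues satisfy σ_ℓ ≤ c₀ e^{−α ℓ^{1/d}}, after rescaling by c₀.) -/
open Real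

/-- For `x ≥ 1`, `x - 1 ≤ x * log x`. -/
lemma aux_xlog {x : ℝ} (hx : 1 ≤ x) : x - 1 ≤ x * Real.log x := by
  have hx0 : (0:ℝ) < x := lt_of_lt_of_le one_pos hx
  have h := Real.log_le_sub_one_of_pos (show (0:ℝ) < 1/x by positivity)
  rw [Real.log_div one_ne_zero (ne_of_gt hx0), Real.log_one] at h
  have h2 := mul_le_mul_of_nonneg_left h hx0.le
  have h3 : x * (1/x) = 1 := mul_one_div_cancel (ne_of_gt hx0)
  nlinarith

/-- The key summation lemma: `∑_{ℓ ≥ 1} e^{-β ℓ^{1/d}} ≤ d! β^{-d}`, together with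
summability. -/
lemma sum_exp_pow_le (d : ℕ) (hd : 1 ≤ d) {β : ℝ} (hβ : 0 < β) :
    Summable (fun ℓ : ℕ+ => Real.exp (-(β * (ℓ : ℝ) ^ ((1 : ℝ)/d)))) ∧
    (∑' ℓ : ℕ+, Real.exp (-(β * (ℓ : ℝ) ^ ((1 : ℝ)/d)))) ≤
      (Nat.factorial d : ℝ) * (β ^ d)⁻¹ := by
  have hdpos : (0:ℝ) < (d:ℝ) := by exact_mod_cast Nat.lt_of_lt_of_le Nat.zero_lt_one hd
  set p : ℝ := (1:ℝ)/(d:ℝ) with hp_def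
  have hp : 0 < p := by positivity
  -- the value of the integral
  have hI : ∫ x in Set.Ioi (0:ℝ), Real.exp (-β * x ^ p) =
      β ^ (-1/p) * Real.Gamma (1/p + 1) := integral_exp_neg_mul_rpow hp hβ
  have h1p : 1/p = (d:ℝ) := by
    rw [hp_def, one_div_one_div]
  have hRHS : β ^ (-1/p) * Real.Gamma (1/p + 1) = (Nat.factorial d : ℝ) * (β ^ d)⁻¹ := by
    rw [neg_div, h1p, Real.Gamma_nat_eq_factorial, Real.rpow_neg hβ.le, Real.rpow_natCast,
      mul_comm]
  rw [hRHS] at hI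
  have hpos : (0:ℝ) < (Nat.factorial d : ℝ) * (β ^ d)⁻¹ := by positivity
  -- integrability (otherwise the integral would be zero)
  have hint : MeasureTheory.IntegrableOn (fun x => Real.exp (-β * x ^ p))
      (Set.Ioi (0:ℝ)) := by
    by_contra h
    rw [MeasureTheory.integral_undef h] at hI
    exact absurd hI.symm (ne_of_gt hpos)
  -- antitonicity
  have hanti : ∀ n : ℕ, AntitoneOn (fun x => Real.exp (-β * x ^ p))
      (Set.Icc (0:ℝ) (0 + n)) := by
    intro n x hx y hy hxy
    dsimp only
    apply Real.exp_le_exp.2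
    have : x ^ p ≤ y ^ p := Real.rpow_le_rpow hx.1 hxy hp.le
    nlinarith
  -- partial sums bounded by the integral
  have hsum : ∀ n : ℕ, ∑ i ∈ Finset.range n, Real.exp (-β * ((i:ℝ)+1) ^ p) ≤
      (Nat.factorial d : ℝ) * (β ^ d)⁻¹ := by
    intro n
    have h1 := (hanti n).sum_le_integral
    simp only [zero_add] at h1
    have hconv : (∑ i ∈ Finset.range n, Real.exp (-β * ((i:ℝ)+1) ^ p)) =
        ∑ i ∈ Finset.range n, Real.exp (-β * (((i:ℕ)+1 : ℕ) : ℝ) ^ p) := by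
      apply Finset.sum_congr rfl
      intro i _
      push_cast
      ring_nf
    rw [hconv]
    refine le_trans h1 ?_
    rw [intervalIntegral.integral_of_le (by positivity : (0:ℝ) ≤ (n:ℝ))]
    rw [← hI]
    apply MeasureTheory.setIntegral_mono_set hint
    · filter_upwards with x using (Real.exp_pos _).le
    · exact (Set.Ioc_subset_Ioi_self).eventuallyLE
  -- transfer to ℕ+
  have hterm : ∀ n : ℕ, Real.exp (-(β * (((Equiv.pnatEquivNat.symm n) : ℕ+) : ℝ) ^ p)) =
      Real.exp (-β * ((n:ℝ)+1) ^ p) := by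
    intro n
    have : (((Equiv.pnatEquivNat.symm n) : ℕ+) : ℝ) = (n:ℝ) + 1 := by
      simp [Equiv.pnatEquivNat, Nat.succPNat]
    rw [this, neg_mul]
  have hgsummable : Summable (fun n : ℕ => Real.exp (-β * ((n:ℝ)+1) ^ p)) :=
    summable_of_sum_range_le (fun n => (Real.exp_pos _).le) hsum
  have hsummable : Summable (fun ℓ : ℕ+ => Real.exp (-(β * (ℓ : ℝ) ^ p))) := by
    rw [← Equiv.summable_iff (Equiv.pnatEquivNat.symm)]
    exact hgsummable.congr (fun n => (hterm n).symm)
  refine ⟨hsummable, ?_⟩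
  have htsum_eq : (∑' ℓ : ℕ+, Real.exp (-(β * (ℓ : ℝ) ^ p))) =
      ∑' n : ℕ, Real.exp (-β * ((n:ℝ)+1) ^ p) := by
    rw [← Equiv.tsum_eq (Equiv.pnatEquivNat.symm) (fun ℓ : ℕ+ => Real.exp (-(β * (ℓ : ℝ) ^ p)))]
    exact tsum_congr hterm
  rw [htsum_eq]
  exact Real.tsum_le_of_sum_range_le (fun n => (Real.exp_pos _).le) hsum

/-- Pointwise bound: `1/(1 + e^{-L} e^t) ≤ e^{θL} e^{-θt}` for `0 < θ ≤ 1`. -/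
lemma term_bound {lam t L θ : ℝ} (hlam : lam = Real.exp (-L)) (hθ1 : θ ≤ 1)
    (hθ0 : 0 ≤ θ) :
    1 / (1 + lam * Real.exp t) ≤ Real.exp (θ * L) * Real.exp (-(θ * t)) := by
  have hlampos : 0 < lam := by rw [hlam]; exact Real.exp_pos _
  have hden : 0 < 1 + lam * Real.exp t := by positivity
  rw [← Real.exp_add]
  rcases le_total t L with h | h
  · have h1 : 1 / (1 + lam * Real.exp t) ≤ 1 := by
      rw [div_le_one hden]
      nlinarith [mul_pos hlampos (Real.exp_pos t)]
    refine h1.trans (Real.one_le_exp ?_)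
    nlinarith
  · have hle : Real.exp (t - L) ≤ 1 + lam * Real.exp t := by
      have : lam * Real.exp t = Real.exp (t - L) := by
        rw [hlam, ← Real.exp_add]; ring_nf
      linarith [this.ge]
    calc 1 / (1 + lam * Real.exp t) ≤ 1 / Real.exp (t - L) :=
          one_div_le_one_div_of_le (Real.exp_pos _) hle
      _ = Real.exp (L - t) := by rw [one_div, ← Real.exp_neg]; ring_nf
      _ ≤ Real.exp (θ * L + -(θ * t)) := by
          apply Real.exp_le_exp.2
          nlinarith

/-- The scalar inequality: with `θ = min 1 (d/L)` and `L ≥ 1`, `d ≥ 1`,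
`e^{θL} θ^{-d} ≤ e L^d`. -/
lemma scalar_bound (d : ℕ) (hd : 1 ≤ d) {L : ℝ} (hL : 1 ≤ L) :
    Real.exp (min 1 ((d:ℝ)/L) * L) * ((min 1 ((d:ℝ)/L)) ^ d)⁻¹ ≤
      Real.exp 1 * L ^ d := by
  have hL0 : (0:ℝ) < L := lt_of_lt_of_le one_pos hL
  have hd0 : (0:ℝ) < (d:ℝ) := by exact_mod_cast Nat.lt_of_lt_of_le Nat.zero_lt_one hd
  have hd1 : (1:ℝ) ≤ (d:ℝ) := by exact_mod_cast hd
  rcases le_total L (d:ℝ) with hcase | hcase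
  · -- θ = 1
    have hθ : min 1 ((d:ℝ)/L) = 1 := min_eq_left (by rw [le_div_iff₀ hL0]; linarith)
    rw [hθ, one_pow, inv_one, mul_one, one_mul]
    have hlog : L ≤ 1 + (d:ℝ) * Real.log L := by
      have h1 : L - 1 ≤ L * Real.log L := aux_xlog hL
      have h2 : L * Real.log L ≤ (d:ℝ) * Real.log L :=
        mul_le_mul_of_nonneg_right hcase (Real.log_nonneg hL)
      linarith
    calc Real.exp L ≤ Real.exp (1 + (d:ℝ) * Real.log L) := Real.exp_le_exp.2 hlog
      _ = Real.exp 1 * L ^ d := by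
          rw [Real.exp_add, Real.exp_nat_mul, Real.exp_log hL0]
  · -- θ = d/L
    have hθ : min 1 ((d:ℝ)/L) = (d:ℝ)/L := min_eq_right (by
      rw [div_le_one hL0]; exact hcase)
    rw [hθ]
    have hθL : (d:ℝ)/L * L = (d:ℝ) := div_mul_cancel₀ _ (ne_of_gt hL0)
    rw [hθL]
    have hpowpos : (0:ℝ) < ((d:ℝ)/L) ^ d := by positivity
    rw [div_pow, inv_div]
    -- goal: exp d * (L^d / d^d) ≤ exp 1 * L^d
    have hed : Real.exp (d:ℝ) ≤ Real.exp 1 * (d:ℝ) ^ d := by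
      have h1 : (d:ℝ) - 1 ≤ (d:ℝ) * Real.log (d:ℝ) := aux_xlog hd1
      calc Real.exp (d:ℝ) ≤ Real.exp (1 + (d:ℝ) * Real.log (d:ℝ)) :=
            Real.exp_le_exp.2 (by linarith)
        _ = Real.exp 1 * (d:ℝ) ^ d := by
            rw [Real.exp_add, Real.exp_nat_mul, Real.exp_log hd0]
    have hdd : (0:ℝ) < (d:ℝ) ^ d := by positivity
    have hLd : (0:ℝ) ≤ L ^ d := by positivity
    calc Real.exp (d:ℝ) * (L ^ d / (d:ℝ) ^ d) =
          (Real.exp (d:ℝ) / (d:ℝ) ^ d) * L ^ d := by ring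
      _ ≤ Real.exp 1 * L ^ d := by
          apply mul_le_mul_of_nonneg_right _ hLd
          rw [div_le_iff₀ hdd]
          linarith

/-- There is an absolute constant `C > 0` such that for every integer
`d ≥ 1`, every real `α > 0` and every `0 < λ ≤ e⁻¹`:
`∑_{ℓ=1}^∞ 1 / (1 + λ e^{α ℓ^{1/d}}) ≤ C · d! · α^{−d} · (log(1/λ))^d`. -/
theorem effective_dimension_bound_exponential_decay :
    ∃ C : ℝ, 0 < C ∧ ∀ d : ℕ, 1 ≤ d → ∀ α : ℝ, 0 < α → ∀ lam : ℝ,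
      0 < lam → lam ≤ (Real.exp 1)⁻¹ →
      (∑' ℓ : ℕ+, 1 / (1 + lam * Real.exp (α * (ℓ : ℝ) ^ ((1 : ℝ) / d)))) ≤
        C * (Nat.factorial d : ℝ) * (α ^ d)⁻¹ * (Real.log (1 / lam)) ^ d := by
  refine ⟨Real.exp 1, Real.exp_pos 1, ?_⟩
  intro d hd α hα lam hlam hlam'
  set L : ℝ := Real.log (1 / lam) with hLdef
  have hd0 : (0:ℝ) < (d:ℝ) := by exact_mod_cast Nat.lt_of_lt_of_le Nat.zero_lt_one hd
  have hL1 : 1 ≤ L := by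
    rw [hLdef, Real.le_log_iff_exp_le (by positivity)]
    calc Real.exp 1 = 1 / (Real.exp 1)⁻¹ := by rw [one_div, inv_inv]
      _ ≤ 1 / lam := one_div_le_one_div_of_le hlam hlam'
  have hL0 : (0:ℝ) < L := lt_of_lt_of_le one_pos hL1
  have hlam_eq : lam = Real.exp (-L) := by
    rw [hLdef, one_div, Real.log_inv, neg_neg, Real.exp_log hlam]
  set θ : ℝ := min 1 ((d:ℝ)/L) with hθdef
  have hθ0 : 0 < θ := lt_min one_pos (by positivity)
  have hθ1 : θ ≤ 1 := min_le_left _ _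
  have hβ : 0 < θ * α := mul_pos hθ0 hα
  obtain ⟨hsummable, hsum⟩ := sum_exp_pow_le d hd hβ
  -- pointwise bound
  have hptwise : ∀ ℓ : ℕ+, 1 / (1 + lam * Real.exp (α * (ℓ : ℝ) ^ ((1 : ℝ)/d))) ≤
      Real.exp (θ * L) * Real.exp (-(θ * α * (ℓ : ℝ) ^ ((1 : ℝ)/d))) := by
    intro ℓ
    have := term_bound (t := α * (ℓ : ℝ) ^ ((1 : ℝ)/d)) hlam_eq hθ1 hθ0.le
    convert this using 3
    ring
  have hmaj_summable : Summable (fun ℓ : ℕ+ =>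
      Real.exp (θ * L) * Real.exp (-(θ * α * (ℓ : ℝ) ^ ((1 : ℝ)/d)))) := by
    apply Summable.mul_left
    exact hsummable
  have hnonneg : ∀ ℓ : ℕ+,
      0 ≤ 1 / (1 + lam * Real.exp (α * (ℓ : ℝ) ^ ((1 : ℝ)/d))) := by
    intro ℓ
    positivity
  have hLHS_summable : Summable (fun ℓ : ℕ+ =>
      1 / (1 + lam * Real.exp (α * (ℓ : ℝ) ^ ((1 : ℝ)/d)))) :=
    Summable.of_nonneg_of_le hnonneg hptwise hmaj_summable
  calc (∑' ℓ : ℕ+, 1 / (1 + lam * Real.exp (α * (ℓ : ℝ) ^ ((1 : ℝ)/d))))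
      ≤ ∑' ℓ : ℕ+, Real.exp (θ * L) * Real.exp (-(θ * α * (ℓ : ℝ) ^ ((1 : ℝ)/d))) :=
        Summable.tsum_le_tsum hptwise hLHS_summable hmaj_summable
    _ = Real.exp (θ * L) * ∑' ℓ : ℕ+, Real.exp (-(θ * α * (ℓ : ℝ) ^ ((1 : ℝ)/d))) :=
        tsum_mul_left
    _ ≤ Real.exp (θ * L) * ((Nat.factorial d : ℝ) * ((θ * α) ^ d)⁻¹) := by
        apply mul_le_mul_of_nonneg_left hsum (Real.exp_pos _).le
    _ = ((Nat.factorial d : ℝ) * (α ^ d)⁻¹) * (Real.exp (θ * L) * (θ ^ d)⁻¹) := by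
        rw [mul_pow, mul_inv]; ring
    _ ≤ ((Nat.factorial d : ℝ) * (α ^ d)⁻¹) * (Real.exp 1 * L ^ d) := by
        apply mul_le_mul_of_nonneg_left (scalar_bound d hd hL1) (by positivity)
    _ = Real.exp 1 * (Nat.factorial d : ℝ) * (α ^ d)⁻¹ * L ^ d := by ring
end

section
/- There exists an absolute constant C > 0 such that for every integer d ≥ 1, every real α > 0 and every λ with 0 < λ ≤ e^{−1}: ∫₀^∞ dt / (1 + λ e^{α t^{1/d}}) ≤ C · d! · α^{−d} · (log(1/λ))^d. -/
open Real MeasureTheory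

/-- There is an absolute constant `C > 0` such that for every integer
`d ≥ 1`, every real `α > 0` and every `0 < λ ≤ e⁻¹`:
`∫₀^∞ dt / (1 + λ e^{α t^{1/d}}) ≤ C · d! · α^{−d} · (log(1/λ))^d`, the integral being
the Lebesgue integral over `t ∈ (0, ∞)`. -/
theorem integral_bound_exponential_decay :
    ∃ C : ℝ, 0 < C ∧ ∀ d : ℕ, 1 ≤ d → ∀ α : ℝ, 0 < α → ∀ lam : ℝ,
      0 < lam → lam ≤ (Real.exp 1)⁻¹ →
      (∫ t in Set.Ioi (0 : ℝ), 1 / (1 + lam * Real.exp (α * t ^ ((1 : ℝ) / d)))) ≤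
        C * (Nat.factorial d : ℝ) * (α ^ d)⁻¹ * (Real.log (1 / lam)) ^ d := by
  refine ⟨Real.exp 1, Real.exp_pos 1, ?_⟩
  intro d hd α hα lam hlam hlam'
  set L : ℝ := Real.log (1 / lam) with hLdef
  have hlog : Real.log lam ≤ -1 := by
    have := Real.log_le_log hlam hlam'
    rwa [Real.log_inv, Real.log_exp] at this
  have hL1 : 1 ≤ L := by
    rw [hLdef, one_div, Real.log_inv]; linarith
  have hL0 : 0 < L := lt_of_lt_of_le one_pos hL1
  have hlamlog : Real.log lam = -L := by
    rw [hLdef, one_div, Real.log_inv]; ring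
  set β : ℝ := α / L with hβdef
  have hβ0 : 0 < β := div_pos hα hL0
  have hβL : β * L = α := by rw [hβdef]; field_simp
  have hd0 : (0 : ℝ) < (d : ℝ) := by exact_mod_cast hd
  set p : ℝ := (1 : ℝ) / (d : ℝ) with hpdef
  have hp0 : 0 < p := by positivity
  -- pointwise bound
  have key : ∀ u : ℝ, 0 ≤ u →
      1 / (1 + lam * Real.exp (α * u)) ≤ Real.exp 1 * Real.exp (-β * u) := by
    intro u hu
    have hden : 0 < 1 + lam * Real.exp (α * u) := by positivity
    have hE : Real.exp 1 * Real.exp (-β * u) = Real.exp (1 - β * u) := by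
      rw [← Real.exp_add]; ring_nf
    rw [hE]
    rcases le_or_gt (β * u) 1 with h | h
    · have h1 : 1 / (1 + lam * Real.exp (α * u)) ≤ 1 := by
        rw [div_le_one hden]
        nlinarith [Real.exp_pos (α * u)]
      have h2 : (1 : ℝ) ≤ Real.exp (1 - β * u) := by
        apply Real.one_le_exp; linarith
      linarith
    · have hx : 0 < lam * Real.exp (α * u) := by positivity
      have h1 : 1 / (1 + lam * Real.exp (α * u)) ≤ 1 / (lam * Real.exp (α * u)) := by
        apply one_div_le_one_div_of_le hx; linarith
      have h2 : 1 / (lam * Real.exp (α * u)) = Real.exp (L - α * u) := by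
        rw [one_div, ← Real.exp_log hlam, ← Real.exp_add, ← Real.exp_neg]
        congr 1; rw [hlamlog]; ring
      have h3 : Real.exp (L - α * u) ≤ Real.exp (1 - β * u) := by
        apply Real.exp_le_exp.mpr
        have hαu : α * u = β * u * L := by rw [← hβL]; ring
        nlinarith [mul_nonneg (le_of_lt (sub_pos.mpr h)) (sub_nonneg.mpr hL1)]
      calc 1 / (1 + lam * Real.exp (α * u)) ≤ 1 / (lam * Real.exp (α * u)) := h1
        _ = Real.exp (L - α * u) := h2
        _ ≤ Real.exp (1 - β * u) := h3
  -- integrability of the majorant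
  have hg_int : IntegrableOn (fun t : ℝ => Real.exp (-β * t ^ p)) (Set.Ioi 0) := by
    rw [← MeasureTheory.integrableOn_Ioi_comp_rpow_iff _ (ne_of_gt hd0 : (d : ℝ) ≠ 0)]
    have h0 : IntegrableOn
        (fun x : ℝ => x ^ ((d : ℝ) - 1) * Real.exp (-β * x ^ (1 : ℝ))) (Set.Ioi 0) :=
      integrableOn_rpow_mul_exp_neg_mul_rpow (by linarith) one_pos hβ0
    have h1 : IntegrableOn
        (fun x : ℝ => (d : ℝ) * (x ^ ((d : ℝ) - 1) * Real.exp (-β * x ^ (1 : ℝ))))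
        (Set.Ioi 0) := h0.const_mul _
    refine h1.congr_fun (fun x hx => ?_) measurableSet_Ioi
    have hx0 : (0 : ℝ) < x := hx
    have hxd : (x ^ (d : ℝ)) ^ p = x := by
      rw [← Real.rpow_mul hx0.le, hpdef, mul_one_div_cancel (ne_of_gt hd0), Real.rpow_one]
    rw [smul_eq_mul, hxd, abs_of_pos hd0]; beta_reduce; rw [Real.rpow_one]; ring
  have hge_int : IntegrableOn (fun t : ℝ => Real.exp 1 * Real.exp (-β * t ^ p))
      (Set.Ioi 0) := hg_int.const_mul _
  -- value of the majorant integral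
  have hg_val : (∫ t in Set.Ioi (0 : ℝ), Real.exp (-β * t ^ p))
      = (Nat.factorial d : ℝ) * (β ^ d)⁻¹ := by
    have h0 := integral_rpow_mul_exp_neg_mul_rpow hp0 (by norm_num : (-1 : ℝ) < 0) hβ0
    have h1 : (∫ t in Set.Ioi (0 : ℝ), Real.exp (-β * t ^ p))
        = ∫ x in Set.Ioi (0 : ℝ), x ^ (0 : ℝ) * Real.exp (-β * x ^ p) := by
      refine setIntegral_congr_fun measurableSet_Ioi (fun x hx => ?_)
      rw [Real.rpow_zero, one_mul]
    rw [h1, h0]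
    have hpval : (0 + 1) / p = (d : ℝ) := by
      rw [hpdef]; field_simp; norm_num
    rw [hpval]
    obtain ⟨m, rfl⟩ : ∃ m, d = m + 1 := ⟨d - 1, (Nat.succ_pred_eq_of_pos hd).symm⟩
    have hΓ : Real.Gamma (((m + 1 : ℕ) : ℝ)) = (Nat.factorial m : ℝ) := by
      push_cast; rw [Real.Gamma_nat_eq_factorial]
    rw [hΓ]
    have hβd : β ^ (-(m + 1 : ℕ) : ℝ) = (β ^ (m + 1 : ℕ))⁻¹ := by
      rw [Real.rpow_neg hβ0.le, Real.rpow_natCast]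
    have : (-(0 + 1 : ℝ)) / p = (-(m + 1 : ℕ) : ℝ) := by
      rw [neg_div, hpval]
    have h1p : 1 / p = ((m + 1 : ℕ) : ℝ) := by rw [hpdef, one_div_one_div]
    rw [this, hβd, h1p, Nat.factorial_succ]
    push_cast
    ring
  -- integrability of the integrand
  have hf_meas : AEStronglyMeasurable
      (fun t : ℝ => 1 / (1 + lam * Real.exp (α * t ^ p)))
      (volume.restrict (Set.Ioi 0)) := by
    apply Measurable.aestronglyMeasurable
    fun_prop
  have hf_int : IntegrableOn (fun t : ℝ => 1 / (1 + lam * Real.exp (α * t ^ p)))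
      (Set.Ioi 0) := by
    refine Integrable.mono hge_int hf_meas ?_
    refine (MeasureTheory.ae_restrict_iff' measurableSet_Ioi).mpr ?_
    filter_upwards with t ht
    have ht0 : (0 : ℝ) < t := ht
    have hu : 0 ≤ t ^ p := Real.rpow_nonneg ht0.le p
    have hden : 0 < 1 + lam * Real.exp (α * t ^ p) := by positivity
    rw [Real.norm_eq_abs, Real.norm_eq_abs, abs_of_pos (by positivity),
      abs_of_pos (by positivity)]
    exact key _ hu
  -- compare
  have hmono : (∫ t in Set.Ioi (0 : ℝ), 1 / (1 + lam * Real.exp (α * t ^ p)))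
      ≤ ∫ t in Set.Ioi (0 : ℝ), Real.exp 1 * Real.exp (-β * t ^ p) := by
    refine setIntegral_mono_on hf_int hge_int measurableSet_Ioi (fun t ht => ?_)
    exact key _ (Real.rpow_nonneg (le_of_lt ht) p)
  rw [MeasureTheory.integral_const_mul, hg_val] at hmono
  refine hmono.trans (le_of_eq ?_)
  have hβd : β ^ d = α ^ d / L ^ d := by
    rw [hβdef, div_pow]
  rw [hβd]
  have hα0 : α ^ d ≠ 0 := by positivity
  have hL0' : L ^ d ≠ 0 := by positivity
  field_simp
end
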